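/- arXiv:1709.03816 — 4 statements merged into one kernel-verified Lean document; each statement's English description precedes it below -/
import Mathlib

section
/- Local L∞ estimate for Lane–Emden subsolutions (N = 1): let λ > 0, let 1 ≤ q < 2, let Ω ⊆ ℝ be open, and let u : Ω → ℝ be twice continuously differentiable and positive on Ω with −u''(x) ≤ λ·u(x)^{q−1} for all x ∈ Ω. Then for every x₀ ∈ ℝ and R₀ > 0 with the closed interval [x₀ − R₀, x₀ + R₀] contained in Ω, and every α ≥ 2, one has sup over (x₀ − R₀/2, x₀ + R₀/2) of u ≤ 8√5 · [ ( (1/(2R₀)) ∫_{x₀−R₀}^{x₀+R₀} u^α dx )^{1/α} + (λ/4)^{1/(2−q)} · R₀^{2/(2−q)} ]. -/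
open MeasureTheory
open Set intervalIntegral


/-- Young-type absorption: for `0 ≤ θ < 1`, `a ^ θ ≤ ε a + ε ^ (-θ/(1-θ))`. -/
lemma aux_absorb {θ ε a : ℝ} (hθ0 : 0 ≤ θ) (hθ1 : θ < 1) (hε : 0 < ε) (ha : 0 ≤ a) :
    a ^ θ ≤ ε * a + ε ^ (-θ / (1 - θ)) := by
  have h1θ : (0:ℝ) < 1 - θ := by linarith
  rcases eq_or_lt_of_le hθ0 with hθz | hθpos
  · rw [← hθz]
    simp only [Real.rpow_zero, neg_zero, zero_div]
    have := mul_nonneg hε.le ha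
    linarith
  set c : ℝ := ε ^ (-(1:ℝ) / (1 - θ)) with hc
  have hcpos : 0 < c := Real.rpow_pos_of_pos hε _
  rcases le_or_gt a c with h | h
  · have h2 : a ^ θ ≤ c ^ θ := Real.rpow_le_rpow ha h hθ0
    have hcθ : c ^ θ = ε ^ (-θ / (1 - θ)) := by
      rw [hc, ← Real.rpow_mul hε.le]
      ring_nf
    nlinarith [mul_nonneg hε.le ha]
  · have hapos : 0 < a := lt_trans hcpos h
    have h2 : a ^ θ = a * a ^ (θ - 1) := by
      rw [← Real.rpow_one_add' hapos.le (by intro hcon; linarith : (1:ℝ) + (θ-1) ≠ 0)]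
      ring_nf
    have h3 : a ^ (θ - 1) ≤ c ^ (θ - 1) :=
      Real.rpow_le_rpow_of_nonpos hcpos h.le (by linarith)
    have h4 : c ^ (θ - 1) = ε := by
      rw [hc, ← Real.rpow_mul hε.le]
      rw [show -(1:ℝ) / (1 - θ) * (θ - 1) = 1 by field_simp; ring]
      exact Real.rpow_one ε
    calc a ^ θ = a * a ^ (θ - 1) := h2
    _ ≤ a * ε := by
        apply mul_le_mul_of_nonneg_left _ hapos.le
        rw [← h4]; exact h3
    _ ≤ ε * a + ε ^ (-θ / (1 - θ)) := by
        have := Real.rpow_nonneg hε.le (-θ / (1 - θ))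
        linarith [mul_comm a ε]

lemma aux_avg_eq {c r : ℝ} (hr : 0 < r) (f : ℝ → ℝ) :
    (⨍ (x : ℝ), f x ∂(volume.restrict (Icc (c - r) (c + r))))
      = (1 / (2 * r)) * ∫ y in (c - r)..(c + r), f y := by
  have hle : c - r ≤ c + r := by linarith
  rw [average_eq, measureReal_def, Measure.restrict_apply_univ, Real.volume_Icc,
    show c + r - (c - r) = 2 * r by ring,
    ENNReal.toReal_ofReal (by linarith : (0:ℝ) ≤ 2 * r),
    integral_Icc_eq_integral_Ioc, ← intervalIntegral.integral_of_le hle,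
    smul_eq_mul, one_div, inv_eq_one_div, one_div]

lemma aux_midpoint_le_average {v : ℝ → ℝ} {c r : ℝ} (hr : 0 < r)
    (hv : ConvexOn ℝ (Icc (c - r) (c + r)) v)
    (hvc : ContinuousOn v (Icc (c - r) (c + r))) :
    v c ≤ (1 / (2 * r)) * ∫ y in (c - r)..(c + r), v y := by
  set μ : Measure ℝ := volume.restrict (Icc (c - r) (c + r)) with hμ
  have hle : c - r ≤ c + r := by linarith
  have hvol : μ univ = ENNReal.ofReal (2 * r) := by
    rw [hμ, Measure.restrict_apply_univ, Real.volume_Icc]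
    congr 1; ring
  haveI : IsFiniteMeasure μ := by
    constructor; rw [hvol]; exact ENNReal.ofReal_lt_top
  haveI : NeZero μ := by
    constructor
    intro h0
    rw [h0] at hvol
    simp only [Measure.coe_zero, Pi.zero_apply] at hvol
    have := ENNReal.ofReal_pos.mpr (by linarith : (0:ℝ) < 2 * r)
    rw [← hvol] at this
    exact lt_irrefl _ this
  have hfs : ∀ᵐ x ∂μ, id x ∈ Icc (c - r) (c + r) := ae_restrict_mem measurableSet_Icc
  have hfi : Integrable id μ := (continuous_id.continuousOn).integrableOn_Icc
  have hgi : Integrable (v ∘ id) μ := hvc.integrableOn_Icc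
  have key := hv.map_average_le hvc isClosed_Icc hfs hfi hgi
  have havg_id : (⨍ (x : ℝ), id x ∂μ) = c := by
    rw [hμ, aux_avg_eq hr]
    simp only [id]
    rw [integral_id]
    field_simp
    ring
  rw [havg_id] at key
  calc v c ≤ ⨍ (x : ℝ), v (id x) ∂μ := key
  _ = (1 / (2 * r)) * ∫ y in (c - r)..(c + r), v y := by
      rw [hμ]; exact aux_avg_eq hr v

lemma aux_power_mean {u : ℝ → ℝ} {c r α : ℝ} (hr : 0 < r) (hα : 1 ≤ α)
    (huc : ContinuousOn u (Icc (c - r) (c + r)))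
    (hupos : ∀ y ∈ Icc (c - r) (c + r), 0 ≤ u y) :
    (1 / (2 * r)) * ∫ y in (c - r)..(c + r), u y
      ≤ ((1 / (2 * r)) * ∫ y in (c - r)..(c + r), u y ^ α) ^ (1 / α) := by
  have hαpos : (0:ℝ) < α := by linarith
  set μ : Measure ℝ := volume.restrict (Icc (c - r) (c + r)) with hμ
  have hle : c - r ≤ c + r := by linarith
  have hvol : μ univ = ENNReal.ofReal (2 * r) := by
    rw [hμ, Measure.restrict_apply_univ, Real.volume_Icc]
    congr 1; ring
  haveI : IsFiniteMeasure μ := by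
    constructor; rw [hvol]; exact ENNReal.ofReal_lt_top
  haveI : NeZero μ := by
    constructor
    intro h0
    rw [h0] at hvol
    simp only [Measure.coe_zero, Pi.zero_apply] at hvol
    have := ENNReal.ofReal_pos.mpr (by linarith : (0:ℝ) < 2 * r)
    rw [← hvol] at this
    exact lt_irrefl _ this
  have hg : ConvexOn ℝ (Ici 0) fun t : ℝ => t ^ α := convexOn_rpow hα
  have hgc : ContinuousOn (fun t : ℝ => t ^ α) (Ici 0) := by
    intro t _
    exact (Real.continuousAt_rpow_const t α (Or.inr hαpos.le)).continuousWithinAt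
  have hfs : ∀ᵐ x ∂μ, u x ∈ Ici (0:ℝ) := by
    filter_upwards [ae_restrict_mem measurableSet_Icc] with x hx
    exact hupos x hx
  have hfi : Integrable u μ := huc.integrableOn_Icc
  have hgi : Integrable ((fun t : ℝ => t ^ α) ∘ u) μ := by
    apply ContinuousOn.integrableOn_Icc
    exact huc.rpow_const (fun x hx => Or.inr hαpos.le)
  have key := hg.map_average_le hgc isClosed_Ici hfs hfi hgi
  rw [hμ, aux_avg_eq hr, aux_avg_eq hr] at key
  have havg_nonneg : 0 ≤ (1 / (2 * r)) * ∫ y in (c - r)..(c + r), u y := by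
    apply mul_nonneg (by positivity)
    exact intervalIntegral.integral_nonneg hle hupos
  calc (1 / (2 * r)) * ∫ y in (c - r)..(c + r), u y
      = (((1 / (2 * r)) * ∫ y in (c - r)..(c + r), u y) ^ α) ^ (1/α) := by
        rw [← Real.rpow_mul havg_nonneg, mul_one_div, div_self hαpos.ne', Real.rpow_one]
  _ ≤ ((1 / (2 * r)) * ∫ y in (c - r)..(c + r), u y ^ α) ^ (1/α) := by
        apply Real.rpow_le_rpow (Real.rpow_nonneg havg_nonneg α) key (by positivity)

lemma aux_local {Ω : Set ℝ} (hΩ : IsOpen Ω) {u : ℝ → ℝ} (hu : ContDiffOn ℝ 2 u Ω)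
    {c r K : ℝ} (hr : 0 < r) (hIΩ : Icc (c - r) (c + r) ⊆ Ω)
    (hK : ∀ y ∈ Icc (c - r) (c + r), 0 ≤ deriv (deriv u) y + K) :
    u c ≤ ((1 / (2 * r)) * ∫ y in (c - r)..(c + r), u y) + K * r ^ 2 / 6 := by
  have hle : c - r ≤ c + r := by linarith
  have hd1 : ContDiffOn ℝ 1 (deriv u) Ω := by
    apply hu.deriv_of_isOpen hΩ
    norm_num
  have hud : ∀ y ∈ Ω, HasDerivAt u (deriv u y) y := fun y hy =>
    ((hu.differentiableOn (by norm_num)).differentiableAt (hΩ.mem_nhds hy)).hasDerivAt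
  have hud2 : ∀ y ∈ Ω, HasDerivAt (deriv u) (deriv (deriv u) y) y := fun y hy =>
    ((hd1.differentiableOn (by norm_num)).differentiableAt (hΩ.mem_nhds hy)).hasDerivAt
  set v : ℝ → ℝ := fun y => u y + K / 2 * (y - c) ^ 2 with hv
  have hioo : interior (Icc (c - r) (c + r)) ⊆ Ω := interior_subset.trans hIΩ
  have hconv : ConvexOn ℝ (Icc (c - r) (c + r)) v := by
    apply convexOn_of_hasDerivWithinAt2_nonneg (convex_Icc _ _)
      (f' := fun y => deriv u y + K * (y - c))
      (f'' := fun y => deriv (deriv u) y + K)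
    · have hcu : ContinuousOn u (Icc (c - r) (c + r)) := (hu.continuousOn).mono hIΩ
      exact hcu.add ((continuous_const.mul ((continuous_id.sub continuous_const).pow 2)).continuousOn)
    · intro y hy
      have h1 : HasDerivAt v (deriv u y + K * (y - c)) y := by
        have h2 : HasDerivAt (fun y : ℝ => K / 2 * (y - c) ^ 2) (K * (y - c)) y := by
          have := (((hasDerivAt_id y).sub_const c).pow 2).const_mul (K / 2)
          refine this.congr_deriv ?_
          simp only [id]
          ring
        exact (hud y (hioo hy)).add h2
      exact h1.hasDerivWithinAt
    · intro y hy
      have h1 : HasDerivAt (fun y => deriv u y + K * (y - c)) (deriv (deriv u) y + K) y := by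
        have h2 : HasDerivAt (fun y : ℝ => K * (y - c)) K y := by
          have := ((hasDerivAt_id y).sub_const c).const_mul K
          refine this.congr_deriv ?_
          ring
        exact (hud2 y (hioo hy)).add h2
      exact h1.hasDerivWithinAt
    · intro y hy
      exact hK y (interior_subset hy)
  have hcu : ContinuousOn u (Icc (c - r) (c + r)) := (hu.continuousOn).mono hIΩ
  have hvc : ContinuousOn v (Icc (c - r) (c + r)) :=
    hcu.add ((continuous_const.mul ((continuous_id.sub continuous_const).pow 2)).continuousOn)
  have hmid := aux_midpoint_le_average hr hconv hvc
  have hiu : IntervalIntegrable u volume (c - r) (c + r) := by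
    apply ContinuousOn.intervalIntegrable
    rwa [uIcc_of_le hle]
  have hiq : IntervalIntegrable (fun y : ℝ => K / 2 * (y - c) ^ 2) volume (c - r) (c + r) :=
    ((continuous_const.mul ((continuous_id.sub continuous_const).pow 2))).intervalIntegrable _ _
  have hsplit : (∫ y in (c - r)..(c + r), v y)
      = (∫ y in (c - r)..(c + r), u y) + ∫ y in (c - r)..(c + r), K / 2 * (y - c) ^ 2 :=
    intervalIntegral.integral_add hiu hiq
  have hquad : (∫ y in (c - r)..(c + r), K / 2 * (y - c) ^ 2) = K / 2 * (2 * r ^ 3 / 3) := by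
    rw [intervalIntegral.integral_const_mul]
    congr 1
    have := intervalIntegral.integral_comp_sub_right (a := c - r) (b := c + r)
      (fun y : ℝ => y ^ 2) c
    rw [this, show c - r - c = -r by ring, show c + r - c = r by ring, integral_pow]
    norm_num
    ring
  have hvc2 : v c = u c := by simp [hv]
  rw [hvc2, hsplit, hquad] at hmid
  calc u c ≤ (1 / (2 * r)) * ((∫ y in (c - r)..(c + r), u y) + K / 2 * (2 * r ^ 3 / 3)) := hmid
  _ = ((1 / (2 * r)) * ∫ y in (c - r)..(c + r), u y) + K * r ^ 2 / 6 := by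
      field_simp
      ring


/-- Scalar absorption estimate for the curvature term. -/
lemma aux_absorb2 {lam q r R₀ S' : ℝ} (hlam : 0 < lam) (hq1 : 1 ≤ q) (hq2 : q < 2)
    (hr : 0 < r) (hR₀ : 0 < R₀) (hrR : r ≤ R₀ / 2) (hS' : 0 < S') :
    lam * S' ^ (q - 1) * r ^ 2 / 6
      ≤ (1/2) * S' + (lam / 4) ^ (1 / (2 - q)) * R₀ ^ (2 / (2 - q)) := by
  have hq2' : (0:ℝ) < 2 - q := by linarith
  have hθ0 : (0:ℝ) ≤ q - 1 := by linarith
  have hθ1 : q - 1 < 1 := by linarith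
  set B : ℝ := (lam / 4) ^ (1 / (2 - q)) * R₀ ^ (2 / (2 - q)) with hB
  set m : ℝ := lam * r ^ 2 / 3 with hm
  have hmpos : 0 < m := by positivity
  have hε : (0:ℝ) < m⁻¹ := by positivity
  have habs0 := aux_absorb hθ0 hθ1 hε hS'.le
  have hεS : m⁻¹ * S' * (lam * r ^ 2 / 6) = (1/2) * S' := by
    rw [hm]; field_simp; ring
  have hεpow : (m⁻¹) ^ (-(q-1) / (1 - (q-1))) = m ^ ((q-1) / (2 - q)) := by
    rw [← Real.rpow_neg_one m, ← Real.rpow_mul hmpos.le,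
      show (-1 : ℝ) * (-(q-1) / (1 - (q-1))) = (q-1)/(2-q) by
        rw [show (1:ℝ) - (q-1) = 2 - q by ring]; ring]
  have hfact : lam * r ^ 2 / 6 * m ^ ((q-1)/(2-q)) = (1/2) * m ^ ((1:ℝ)/(2-q)) := by
    have h6 : lam * r ^ 2 / 6 = (1/2) * m := by rw [hm]; ring
    have hexp2 : (1:ℝ) + (q-1)/(2-q) = 1/(2-q) := by
      rw [eq_div_iff hq2'.ne', add_mul, one_mul, div_mul_cancel₀ _ hq2'.ne']
      ring
    have hne : (1:ℝ) + (q-1)/(2-q) ≠ 0 := by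
      have : (0:ℝ) ≤ (q-1)/(2-q) := by positivity
      linarith
    rw [h6, mul_assoc, ← Real.rpow_one_add' hmpos.le hne, hexp2]
  have hmB : m ^ ((1:ℝ)/(2-q)) ≤ B := by
    rw [hB]
    have hmle : m ≤ (lam / 4) * R₀ ^ 2 := by
      rw [hm]
      have h1 : r ^ 2 ≤ (R₀/2) ^ 2 := by nlinarith
      have h2 : lam * r ^ 2 ≤ lam * (R₀/2) ^ 2 := mul_le_mul_of_nonneg_left h1 hlam.le
      have h3 : 0 ≤ lam * R₀ ^ 2 := by positivity
      nlinarith [h2, h3]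
    calc m ^ ((1:ℝ)/(2-q)) ≤ ((lam / 4) * R₀ ^ 2) ^ ((1:ℝ)/(2-q)) :=
          Real.rpow_le_rpow hmpos.le hmle (by positivity)
    _ = (lam / 4) ^ ((1:ℝ)/(2-q)) * (R₀ ^ 2) ^ ((1:ℝ)/(2-q)) :=
          Real.mul_rpow (by positivity) (by positivity)
    _ = (lam / 4) ^ (1/(2-q)) * R₀ ^ (2/(2-q)) := by
          congr 1
          rw [← Real.rpow_natCast R₀ 2, ← Real.rpow_mul hR₀.le]
          norm_num
          rw [div_eq_mul_inv]
  have hkey : lam * S' ^ (q - 1) * r ^ 2 / 6 = (lam * r ^ 2 / 6) * S' ^ (q - 1) := by ring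
  rw [hkey]
  have hmm : 0 ≤ m ^ ((1:ℝ)/(2-q)) := Real.rpow_nonneg hmpos.le _
  calc (lam * r ^ 2 / 6) * S' ^ (q - 1)
      ≤ (lam * r ^ 2 / 6) * (m⁻¹ * S' + (m⁻¹) ^ (-(q-1) / (1 - (q-1)))) :=
        mul_le_mul_of_nonneg_left habs0 (by positivity)
  _ = (1/2) * S' + lam * r ^ 2 / 6 * m ^ ((q-1)/(2-q)) := by
        rw [hεpow, mul_add, show lam * r ^ 2 / 6 * (m⁻¹ * S')
          = m⁻¹ * S' * (lam * r ^ 2 / 6) by ring, hεS]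
  _ = (1/2) * S' + (1/2) * m ^ ((1:ℝ)/(2-q)) := by rw [hfact]
  _ ≤ (1/2) * S' + B := by
        have := hmB
        linarith

/-- Scalar scaling estimate for the average term. -/
lemma aux_scale {r R₀ I J α : ℝ} (hr : 0 < r) (hR₀ : 0 < R₀) (hrR : r ≤ R₀) (hα : 2 ≤ α)
    (hI : 0 ≤ I) (hIJ : I ≤ J) :
    ((1 / (2 * r)) * I) ^ (1/α) ≤ (R₀ / r) ^ ((1:ℝ)/2) * ((1 / (2 * R₀)) * J) ^ (1/α) := by
  have hαpos : (0:ℝ) < α := by linarith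
  have hJ : 0 ≤ J := hI.trans hIJ
  have hRr1 : (1:ℝ) ≤ R₀ / r := by
    rw [le_div_iff₀ hr]; linarith
  have h5 : (1 / (2 * r)) * I ≤ (R₀ / r) * ((1 / (2 * R₀)) * J) := by
    have heq : (R₀ / r) * ((1 / (2 * R₀)) * J) = (1 / (2 * r)) * J := by
      field_simp
    rw [heq]
    exact mul_le_mul_of_nonneg_left hIJ (by positivity)
  calc ((1 / (2 * r)) * I) ^ (1/α)
      ≤ ((R₀ / r) * ((1 / (2 * R₀)) * J)) ^ (1/α) :=
        Real.rpow_le_rpow (by positivity) h5 (by positivity)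
  _ = (R₀ / r) ^ ((1:ℝ)/α) * ((1 / (2 * R₀)) * J) ^ (1/α) :=
        Real.mul_rpow (by positivity) (by positivity)
  _ ≤ (R₀ / r) ^ ((1:ℝ)/2) * ((1 / (2 * R₀)) * J) ^ (1/α) := by
        apply mul_le_mul_of_nonneg_right _ (Real.rpow_nonneg (by positivity) _)
        apply Real.rpow_le_rpow_of_exponent_le hRr1
        rw [div_le_div_iff₀ (by linarith) (by norm_num)]
        linarith

lemma aux_step {lam q : ℝ} (hlam : 0 < lam) (hq1 : 1 ≤ q) (hq2 : q < 2)
    {Ω : Set ℝ} (hΩ : IsOpen Ω) {u : ℝ → ℝ} (hu : ContDiffOn ℝ 2 u Ω)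
    (hupos : ∀ x ∈ Ω, 0 < u x)
    (hsub : ∀ x ∈ Ω, -(deriv (deriv u) x) ≤ lam * u x ^ (q - 1))
    (x₀ : ℝ) {R₀ : ℝ} (hR₀ : 0 < R₀) (hIcc : Icc (x₀ - R₀) (x₀ + R₀) ⊆ Ω)
    {α : ℝ} (hα : 2 ≤ α) {t r : ℝ} (ht : R₀ / 2 ≤ t) (hr : 0 < r) (htr : t + r ≤ R₀) :
    sSup (u '' Icc (x₀ - t) (x₀ + t)) ≤
      (R₀ / r) ^ ((1:ℝ)/2) * ((1 / (2 * R₀)) * ∫ y in (x₀ - R₀)..(x₀ + R₀), u y ^ α) ^ (1/α)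
      + (1/2) * sSup (u '' Icc (x₀ - (t + r)) (x₀ + (t + r)))
      + (lam / 4) ^ (1 / (2 - q)) * R₀ ^ (2 / (2 - q)) := by
  have hq2' : (0:ℝ) < 2 - q := by linarith
  have hθ0 : (0:ℝ) ≤ q - 1 := by linarith
  have hrR : r ≤ R₀ / 2 := by linarith
  have hJ' : Icc (x₀ - (t + r)) (x₀ + (t + r)) ⊆ Icc (x₀ - R₀) (x₀ + R₀) :=
    Icc_subset_Icc (by linarith) (by linarith)
  have ucJ : ContinuousOn u (Icc (x₀ - R₀) (x₀ + R₀)) := hu.continuousOn.mono hIcc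
  have hx₀mem : x₀ ∈ Icc (x₀ - (t + r)) (x₀ + (t + r)) := by
    constructor <;> linarith
  have hbdd : BddAbove (u '' Icc (x₀ - (t + r)) (x₀ + (t + r))) :=
    (isCompact_Icc.image_of_continuousOn (ucJ.mono hJ')).bddAbove
  have hub : ∀ y ∈ Icc (x₀ - (t + r)) (x₀ + (t + r)),
      u y ≤ sSup (u '' Icc (x₀ - (t + r)) (x₀ + (t + r))) :=
    fun y hy => le_csSup hbdd (mem_image_of_mem u hy)
  have hS'pos : 0 < sSup (u '' Icc (x₀ - (t + r)) (x₀ + (t + r))) :=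
    lt_of_lt_of_le (hupos x₀ (hIcc (hJ' hx₀mem))) (hub x₀ hx₀mem)
  apply csSup_le (Nonempty.image u ⟨x₀, by constructor <;> linarith⟩)
  rintro z ⟨x, hxmem, rfl⟩
  have hIsub : Icc (x - r) (x + r) ⊆ Icc (x₀ - (t + r)) (x₀ + (t + r)) :=
    Icc_subset_Icc (by linarith [hxmem.1]) (by linarith [hxmem.2])
  have hIsubJ : Icc (x - r) (x + r) ⊆ Icc (x₀ - R₀) (x₀ + R₀) := hIsub.trans hJ'
  have hIΩ : Icc (x - r) (x + r) ⊆ Ω := hIsubJ.trans hIcc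
  have hKbound : ∀ y ∈ Icc (x - r) (x + r), 0 ≤ deriv (deriv u) y
      + lam * sSup (u '' Icc (x₀ - (t + r)) (x₀ + (t + r))) ^ (q - 1) := by
    intro y hy
    have h1 := hsub y (hIΩ hy)
    have h2 : u y ^ (q - 1)
        ≤ sSup (u '' Icc (x₀ - (t + r)) (x₀ + (t + r))) ^ (q - 1) :=
      Real.rpow_le_rpow (hupos y (hIΩ hy)).le (hub y (hIsub hy)) hθ0
    have h3 := mul_le_mul_of_nonneg_left h2 hlam.le
    linarith
  have hloc := aux_local hΩ hu hr hIΩ hKbound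
  have hpm := aux_power_mean hr (by linarith : (1:ℝ) ≤ α) (ucJ.mono hIsubJ)
    (fun y hy => (hupos y (hIΩ hy)).le)
  have hloc_int : 0 ≤ ∫ y in (x - r)..(x + r), u y ^ α := by
    apply intervalIntegral.integral_nonneg (by linarith)
    intro y hy
    exact Real.rpow_nonneg (hupos y (hIΩ hy)).le α
  have hmono : (∫ y in (x - r)..(x + r), u y ^ α)
      ≤ ∫ y in (x₀ - R₀)..(x₀ + R₀), u y ^ α := by
    apply intervalIntegral.integral_mono_interval (hIsubJ (left_mem_Icc.mpr (by linarith))).1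
      (by linarith) (hIsubJ (right_mem_Icc.mpr (by linarith))).2
    · filter_upwards [ae_restrict_mem measurableSet_Ioc] with y hy
      simp only [Pi.zero_apply]
      exact Real.rpow_nonneg (hupos y (hIcc (Ioc_subset_Icc_self hy))).le α
    · apply ContinuousOn.intervalIntegrable
      rw [uIcc_of_le (by linarith)]
      exact ucJ.rpow_const (fun y hy => Or.inr (by linarith))
  have h4 := aux_scale hr hR₀ (by linarith) hα hloc_int hmono
  have habs := aux_absorb2 hlam hq1 hq2 hr hR₀ hrR hS'pos
  calc u x ≤ ((1 / (2 * r)) * ∫ y in (x - r)..(x + r), u y)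
        + lam * sSup (u '' Icc (x₀ - (t + r)) (x₀ + (t + r))) ^ (q - 1) * r ^ 2 / 6 := hloc
  _ ≤ ((1 / (2 * r)) * ∫ y in (x - r)..(x + r), u y ^ α) ^ (1/α)
        + lam * sSup (u '' Icc (x₀ - (t + r)) (x₀ + (t + r))) ^ (q - 1) * r ^ 2 / 6 := by
      linarith
  _ ≤ (R₀ / r) ^ ((1:ℝ)/2) * ((1 / (2 * R₀)) * ∫ y in (x₀ - R₀)..(x₀ + R₀), u y ^ α) ^ (1/α)
        + ((1/2) * sSup (u '' Icc (x₀ - (t + r)) (x₀ + (t + r)))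
          + (lam / 4) ^ (1 / (2 - q)) * R₀ ^ (2 / (2 - q))) := add_le_add h4 habs
  _ = (R₀ / r) ^ ((1:ℝ)/2) * ((1 / (2 * R₀)) * ∫ y in (x₀ - R₀)..(x₀ + R₀), u y ^ α) ^ (1/α)
        + (1/2) * sSup (u '' Icc (x₀ - (t + r)) (x₀ + (t + r)))
        + (lam / 4) ^ (1 / (2 - q)) * R₀ ^ (2 / (2 - q)) := by ring


/-- geometric sums bound -/
lemma aux_gsum1 (n : ℕ) :
    (∑ k ∈ Finset.range n, (1/2:ℝ)^k * (2 * Real.sqrt 2 ^ k)) ≤ 8 := by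
  have hs2 : Real.sqrt 2 ^ 2 = 2 := Real.sq_sqrt (by norm_num)
  have hs2nn : 0 ≤ Real.sqrt 2 := Real.sqrt_nonneg 2
  have hs2le : Real.sqrt 2 ≤ 1.5 := by nlinarith
  have hterm : ∀ k : ℕ, (1/2:ℝ)^k * (2 * Real.sqrt 2 ^ k) = 2 * (Real.sqrt 2 / 2)^k := by
    intro k
    rw [div_pow, div_pow, one_pow]
    field_simp
  rw [Finset.sum_congr rfl (fun k _ => hterm k), ← Finset.mul_sum]
  have hrlt : Real.sqrt 2 / 2 < 1 := by linarith
  have hrnn : 0 ≤ Real.sqrt 2 / 2 := by linarith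
  have hsum : (∑ k ∈ Finset.range n, (Real.sqrt 2 / 2)^k) ≤ (1 - Real.sqrt 2 / 2)⁻¹ := by
    have h1 := Summable.sum_le_tsum (Finset.range n)
      (fun i _ => pow_nonneg hrnn i) (summable_geometric_of_lt_one hrnn hrlt)
    rwa [tsum_geometric_of_lt_one hrnn hrlt] at h1
  have hinv : (1 - Real.sqrt 2 / 2)⁻¹ ≤ 4 := by
    have h14 : (1:ℝ)/4 ≤ 1 - Real.sqrt 2 / 2 := by linarith
    calc (1 - Real.sqrt 2 / 2)⁻¹ ≤ ((1:ℝ)/4)⁻¹ :=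
          inv_anti₀ (by norm_num) h14
    _ = 4 := by norm_num
  nlinarith
lemma aux_gsum2 (n : ℕ) : (∑ k ∈ Finset.range n, (1/2:ℝ)^k) ≤ 2 := by
  have h1 := Summable.sum_le_tsum (Finset.range n)
    (fun i _ => pow_nonneg (by norm_num : (0:ℝ) ≤ 1/2) i)
    (summable_geometric_of_lt_one (by norm_num) (by norm_num : (1/2:ℝ) < 1))
  rwa [tsum_geometric_of_lt_one (by norm_num) (by norm_num : (1/2:ℝ) < 1), show ((1:ℝ) - 1/2)⁻¹ = 2 by norm_num] at h1

lemma aux_coef {R₀ : ℝ} (hR₀ : 0 < R₀) (n : ℕ) :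
    (R₀ / (R₀ * (1/2:ℝ)^(n+2))) ^ ((1:ℝ)/2) = 2 * Real.sqrt 2 ^ n := by
  have h1 : R₀ / (R₀ * (1/2:ℝ)^(n+2)) = (2:ℝ)^(n+2) := by
    rw [show ((1:ℝ)/2)^(n+2) = ((2:ℝ)^(n+2))⁻¹ by rw [one_div, inv_pow]]
    rw [div_eq_iff (by positivity)]
    field_simp
  rw [h1]
  have h2 : ((2:ℝ)^(n+2)) ^ ((1:ℝ)/2) = Real.sqrt 2 ^ (n+2) := by
    rw [← Real.rpow_natCast (2:ℝ) (n+2), ← Real.rpow_mul (by norm_num : (0:ℝ) ≤ 2),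
      Real.sqrt_eq_rpow, ← Real.rpow_natCast ((2:ℝ) ^ ((1:ℝ)/2)) (n+2),
      ← Real.rpow_mul (by norm_num : (0:ℝ) ≤ 2)]
    ring_nf
  rw [h2, pow_succ, pow_succ, mul_assoc]
  rw [show Real.sqrt 2 * Real.sqrt 2 = 2 from Real.mul_self_sqrt (by norm_num)]
  ring

/-- **Local `L^∞` estimate for Lane–Emden subsolutions**, case `N = 1`. -/
theorem local_Linfty_estimate_dim_one
    {lam q : ℝ} (hlam : 0 < lam) (hq1 : 1 ≤ q) (hq2 : q < 2)
    {Ω : Set ℝ} (hΩ : IsOpen Ω)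
    {u : ℝ → ℝ} (hu : ContDiffOn ℝ 2 u Ω) (hupos : ∀ x ∈ Ω, 0 < u x)
    (hsub : ∀ x ∈ Ω, -(deriv (deriv u) x) ≤ lam * u x ^ (q - 1))
    (x₀ : ℝ) {R₀ : ℝ} (hR₀ : 0 < R₀) (hIcc : Set.Icc (x₀ - R₀) (x₀ + R₀) ⊆ Ω)
    {α : ℝ} (hα : 2 ≤ α) :
    ∀ x ∈ Set.Ioo (x₀ - R₀ / 2) (x₀ + R₀ / 2),
      u x ≤ 8 * Real.sqrt 5
        * (((1 / (2 * R₀)) * ∫ y in (x₀ - R₀)..(x₀ + R₀), u y ^ α) ^ (1 / α)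
            + (lam / 4) ^ (1 / (2 - q)) * R₀ ^ (2 / (2 - q))) := by
  intro x hx
  have ucJ : ContinuousOn u (Icc (x₀ - R₀) (x₀ + R₀)) := hu.continuousOn.mono hIcc
  set A' : ℝ := ((1 / (2 * R₀)) * ∫ y in (x₀ - R₀)..(x₀ + R₀), u y ^ α) ^ (1 / α) with hA'
  set B : ℝ := (lam / 4) ^ (1 / (2 - q)) * R₀ ^ (2 / (2 - q)) with hB
  have hq2' : (0:ℝ) < 2 - q := by linarith
  have hAnn : 0 ≤ (1 / (2 * R₀)) * ∫ y in (x₀ - R₀)..(x₀ + R₀), u y ^ α := by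
    apply mul_nonneg (by positivity)
    apply intervalIntegral.integral_nonneg (by linarith)
    intro y hy
    exact Real.rpow_nonneg (hupos y (hIcc hy)).le α
  have hA'nn : 0 ≤ A' := Real.rpow_nonneg hAnn _
  have hBnn : 0 ≤ B := by
    apply mul_nonneg <;> exact Real.rpow_nonneg (by positivity) _
  -- the sequence of radii
  set tseq : ℕ → ℝ := fun n => R₀ * (1 - (1/2:ℝ)^(n+1)) with htseq
  set rseq : ℕ → ℝ := fun n => R₀ * (1/2:ℝ)^(n+2) with hrseq
  have htseq0 : tseq 0 = R₀ / 2 := by simp only [htseq]; norm_num [mul_one_div]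
  have htlow : ∀ n : ℕ, R₀ / 2 ≤ tseq n := by
    intro n
    have h1 : (1/2:ℝ)^(n+1) ≤ (1/2:ℝ)^1 :=
      pow_le_pow_of_le_one (by norm_num) (by norm_num) (by omega)
    simp only [htseq]
    nlinarith
  have hthigh : ∀ n : ℕ, tseq n ≤ R₀ := by
    intro n
    have h1 : (0:ℝ) ≤ (1/2:ℝ)^(n+1) := by positivity
    simp only [htseq]
    nlinarith
  have hradd : ∀ n : ℕ, tseq n + rseq n = tseq (n+1) := by
    intro n
    simp only [htseq, hrseq]
    ring
  have hrpos : ∀ n : ℕ, 0 < rseq n := by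
    intro n; simp only [hrseq]; positivity
  -- sup bounds
  have hbddR : BddAbove (u '' Icc (x₀ - R₀) (x₀ + R₀)) :=
    (isCompact_Icc.image_of_continuousOn ucJ).bddAbove
  have hSmono : ∀ n : ℕ, sSup (u '' Icc (x₀ - tseq n) (x₀ + tseq n))
      ≤ sSup (u '' Icc (x₀ - R₀) (x₀ + R₀)) := by
    intro n
    apply csSup_le_csSup hbddR
    · exact Nonempty.image u ⟨x₀, by constructor <;> nlinarith [htlow n]⟩
    · exact Set.image_mono (Icc_subset_Icc (by nlinarith [hthigh n]) (by nlinarith [hthigh n]))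
  -- the iteration
  have iter : ∀ n : ℕ,
      sSup (u '' Icc (x₀ - tseq 0) (x₀ + tseq 0))
        ≤ (∑ k ∈ Finset.range n, (1/2:ℝ)^k * (2 * Real.sqrt 2 ^ k)) * A'
          + (∑ k ∈ Finset.range n, (1/2:ℝ)^k) * B
          + (1/2:ℝ)^n * sSup (u '' Icc (x₀ - tseq n) (x₀ + tseq n)) := by
    intro n
    induction n with
    | zero => simp
    | succ n ih =>
      have hstep := aux_step hlam hq1 hq2 hΩ hu hupos hsub x₀ hR₀ hIcc hα
        (htlow n) (hrpos n) (by rw [hradd n]; exact hthigh (n+1))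
      rw [hradd n] at hstep
      have hcoef : (R₀ / rseq n) ^ ((1:ℝ)/2) = 2 * Real.sqrt 2 ^ n := aux_coef hR₀ n
      rw [hcoef, ← hA', ← hB] at hstep
      have hpownn : (0:ℝ) ≤ (1/2:ℝ)^n := by positivity
      have h2 := mul_le_mul_of_nonneg_left hstep hpownn
      calc sSup (u '' Icc (x₀ - tseq 0) (x₀ + tseq 0))
          ≤ (∑ k ∈ Finset.range n, (1/2:ℝ)^k * (2 * Real.sqrt 2 ^ k)) * A'
            + (∑ k ∈ Finset.range n, (1/2:ℝ)^k) * B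
            + (1/2:ℝ)^n * sSup (u '' Icc (x₀ - tseq n) (x₀ + tseq n)) := ih
      _ ≤ (∑ k ∈ Finset.range n, (1/2:ℝ)^k * (2 * Real.sqrt 2 ^ k)) * A'
            + (∑ k ∈ Finset.range n, (1/2:ℝ)^k) * B
            + (1/2:ℝ)^n * (2 * Real.sqrt 2 ^ n * A'
              + (1/2) * sSup (u '' Icc (x₀ - tseq (n+1)) (x₀ + tseq (n+1))) + B) := by
          linarith
      _ = (∑ k ∈ Finset.range (n+1), (1/2:ℝ)^k * (2 * Real.sqrt 2 ^ k)) * A'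
            + (∑ k ∈ Finset.range (n+1), (1/2:ℝ)^k) * B
            + (1/2:ℝ)^(n+1) * sSup (u '' Icc (x₀ - tseq (n+1)) (x₀ + tseq (n+1))) := by
          rw [Finset.sum_range_succ, Finset.sum_range_succ]
          ring
  -- uniform bound
  have hbound : ∀ n : ℕ,
      sSup (u '' Icc (x₀ - tseq 0) (x₀ + tseq 0))
        ≤ 8 * A' + 2 * B + (1/2:ℝ)^n * sSup (u '' Icc (x₀ - R₀) (x₀ + R₀)) := by
    intro n
    have h1 := iter n
    have h2 := mul_le_mul_of_nonneg_right (aux_gsum1 n) hA'nn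
    have h3 := mul_le_mul_of_nonneg_right (aux_gsum2 n) hBnn
    have h4 := mul_le_mul_of_nonneg_left (hSmono n) (by positivity : (0:ℝ) ≤ (1/2:ℝ)^n)
    linarith
  -- pass to the limit
  have hlim : Filter.Tendsto
      (fun n : ℕ => 8 * A' + 2 * B + (1/2:ℝ)^n * sSup (u '' Icc (x₀ - R₀) (x₀ + R₀)))
      Filter.atTop (nhds (8 * A' + 2 * B)) := by
    have h1 : Filter.Tendsto (fun n : ℕ => (1/2:ℝ)^n * sSup (u '' Icc (x₀ - R₀) (x₀ + R₀)))
        Filter.atTop (nhds 0) := by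
      have := (tendsto_pow_atTop_nhds_zero_of_lt_one (by norm_num : (0:ℝ) ≤ 1/2)
        (by norm_num : (1/2:ℝ) < 1)).mul_const (sSup (u '' Icc (x₀ - R₀) (x₀ + R₀)))
      simpa using this
    have h2 := h1.const_add (8 * A' + 2 * B)
    simpa using h2
  have hxmem : x ∈ Icc (x₀ - tseq 0) (x₀ + tseq 0) := by
    rw [htseq0]
    exact ⟨hx.1.le, hx.2.le⟩
  have hux : u x ≤ sSup (u '' Icc (x₀ - tseq 0) (x₀ + tseq 0)) := by
    apply le_csSup _ (mem_image_of_mem u hxmem)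
    apply (isCompact_Icc.image_of_continuousOn (ucJ.mono _)).bddAbove
    rw [htseq0]
    exact Icc_subset_Icc (by linarith) (by linarith)
  have hfinal : u x ≤ 8 * A' + 2 * B :=
    ge_of_tendsto' hlim (fun n => hux.trans (hbound n))
  -- conclude with the numeric comparison
  have h5 : (1:ℝ) ≤ Real.sqrt 5 := by
    rw [show (1:ℝ) = Real.sqrt 1 from (Real.sqrt_one).symm]
    exact Real.sqrt_le_sqrt (by norm_num)
  have e1 : 8 * A' ≤ (8 * Real.sqrt 5) * A' :=
    mul_le_mul_of_nonneg_right (by linarith) hA'nn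
  have e2 : 2 * B ≤ (8 * Real.sqrt 5) * B :=
    mul_le_mul_of_nonneg_right (by linarith) hBnn
  calc u x ≤ 8 * A' + 2 * B := hfinal
  _ ≤ (8 * Real.sqrt 5) * A' + (8 * Real.sqrt 5) * B := add_le_add e1 e2
  _ = 8 * Real.sqrt 5 * (A' + B) := by ring
end

section
/- Let N ≥ 1 and let B₁ ⊂ ℝ^N be the open unit ball centered at the origin. Let V : B₁ → ℝ be measurable and satisfy −|x|²/(1 − |x|²)² ≤ V(x) ≤ 0 for almost every x ∈ B₁. Then for every smooth function φ : ℝ^N → ℝ with compact support contained in B₁ one has ∫_{B₁} |∇φ|² dx + ∫_{B₁} V φ² dx ≥ N · ∫_{B₁} φ² dx. -/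
open MeasureTheory Metric Set

namespace GSB

variable {N : ℕ}

local notation "E" => EuclideanSpace ℝ (Fin N)

lemma glue_cont {f : E → ℝ} {K : Set E}
    (hK : IsCompact K) (hKB : K ⊆ ball (0 : E) 1)
    (hf : ContinuousOn f (ball (0 : E) 1))
    (h0 : ∀ x ∉ K, f x = 0) : Continuous f := by
  rw [continuous_iff_continuousAt]
  intro x
  by_cases hx : x ∈ ball (0 : E) 1
  · exact hf.continuousAt (isOpen_ball.mem_nhds hx)
  · have hxK : x ∉ K := fun h => hx (hKB h)
    have hev : f =ᶠ[nhds x] (fun _ => 0) :=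
      Filter.eventually_of_mem (hK.isClosed.isOpen_compl.mem_nhds hxK) h0
    exact ContinuousAt.congr continuousAt_const hev.symm

lemma glue_contDiff {f : E → ℝ} {K : Set E}
    (hK : IsCompact K) (hKB : K ⊆ ball (0 : E) 1)
    (hf : ContDiffOn ℝ (⊤ : ℕ∞) f (ball (0 : E) 1))
    (h0 : ∀ x ∉ K, f x = 0) : ContDiff ℝ (⊤ : ℕ∞) f := by
  rw [contDiff_iff_contDiffAt]
  intro x
  by_cases hx : x ∈ ball (0 : E) 1
  · exact hf.contDiffAt (isOpen_ball.mem_nhds hx)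
  · have hxK : x ∉ K := fun h => hx (hKB h)
    have hev : f =ᶠ[nhds x] (fun _ => 0) :=
      Filter.eventually_of_mem (hK.isClosed.isOpen_compl.mem_nhds hxK) h0
    exact (contDiffAt_const (c := (0:ℝ))).congr_of_eventuallyEq hev

set_option maxHeartbeats 2000000 in
theorem main (hN : 1 ≤ N)
    {V : E → ℝ} (hVmeas : Measurable V)
    (hV : ∀ᵐ x ∂(volume.restrict (Metric.ball (0 : E) 1)),
      -(‖x‖ ^ 2 / (1 - ‖x‖ ^ 2) ^ 2) ≤ V x ∧ V x ≤ 0)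
    (φ : E → ℝ) (hφ : ContDiff ℝ (⊤ : ℕ∞) φ)
    (hφc : HasCompactSupport φ)
    (hφΩ : tsupport φ ⊆ Metric.ball (0 : E) 1) :
    (N : ℝ) * (∫ x in Metric.ball (0 : E) 1, (φ x) ^ 2)
      ≤ (∫ x in Metric.ball (0 : E) 1, ‖gradient φ x‖ ^ 2)
        + ∫ x in Metric.ball (0 : E) 1, V x * (φ x) ^ 2 := by
  set B : Set E := Metric.ball (0 : E) 1 with hBdef
  set K : Set E := tsupport φ with hKdef
  set u : E → ℝ := fun y => 1 - ‖y‖ ^ 2 with hudef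
  set e : Fin N → E := fun i => EuclideanSpace.single i (1 : ℝ) with hedef
  set gi : Fin N → E → ℝ := fun i y => y i * (φ y * (u y)⁻¹) with hgidef
  set W : E → ℝ := fun x => (inner ℝ x (gradient φ x) : ℝ) * (φ x * (u x)⁻¹) with hWdef
  set S1 : E → ℝ := fun x => φ x ^ 2 * (u x)⁻¹ with hS1def
  set S2 : E → ℝ := fun x => ‖x‖ ^ 2 * φ x ^ 2 * ((u x) ^ 2)⁻¹ with hS2def
  -- basic facts
  have hφ0 : ∀ x ∉ K, φ x = 0 := fun x hx => image_eq_zero_of_notMem_tsupport hx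
  have hgrad0 : ∀ x ∉ K, gradient φ x = 0 := by
    intro x hx
    have : fderiv ℝ φ x = 0 := by
      by_contra h
      exact hx (support_fderiv_subset ℝ (Function.mem_support.2 h))
    simp [gradient, this]
  have hupos : ∀ x ∈ B, 0 < u x := by
    intro x hx
    have h1 := mem_ball_zero_iff.1 hx
    have h0 : 0 ≤ ‖x‖ := norm_nonneg x
    show (0:ℝ) < 1 - ‖x‖ ^ 2
    nlinarith
  have hune : ∀ x ∈ B, u x ≠ 0 := fun x hx => ne_of_gt (hupos x hx)
  have huC : ContDiff ℝ (⊤ : ℕ∞) u := contDiff_const.sub (contDiff_norm_sq ℝ)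
  have hgradC : ContDiff ℝ (⊤ : ℕ∞) (fun x : E => gradient φ x) := by
    have h1 : ContDiff ℝ (⊤ : ℕ∞) (fderiv ℝ φ) := hφ.fderiv_right (by simp)
    have h2 := (InnerProductSpace.toDual ℝ E).symm.contDiff (n := (⊤ : ℕ∞))
    exact h2.comp h1
  have hfd : ∀ (x v : E), fderiv ℝ φ x v = (inner ℝ (gradient φ x) v : ℝ) := by
    intro x v
    simp [gradient, InnerProductSpace.toDual_symm_apply]
  have hfdi : ∀ (x : E) (i : Fin N), fderiv ℝ φ x (e i) = gradient φ x i := by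
    intro x i
    rw [hfd, hedef, EuclideanSpace.inner_single_right]
    simp
  -- integrability helper
  have hInt : ∀ f : E → ℝ, Continuous f → (∀ x ∉ K, f x = 0) → Integrable f :=
    fun f hc h0 => hc.integrable_of_hasCompactSupport (HasCompactSupport.intro hφc h0)
  -- smoothness of the gi
  have hgiC : ∀ i, ContDiff ℝ (⊤ : ℕ∞) (gi i) := by
    intro i
    refine glue_contDiff hφc hφΩ ?_ ?_
    · exact ((EuclideanSpace.proj i (𝕜 := ℝ)).contDiff.contDiffOn).mul
        (hφ.contDiffOn.mul (huC.contDiffOn.inv hune))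
    · intro x hx; simp [hgidef, hφ0 x hx]
  have hgics : ∀ i, HasCompactSupport (gi i) :=
    fun i => HasCompactSupport.intro hφc (fun x hx => by simp [hgidef, hφ0 x hx])
  -- continuity and integrability of auxiliary functions
  have hWcont : Continuous W := by
    refine glue_cont hφc hφΩ ?_ ?_
    · exact ((continuous_id.inner hgradC.continuous).continuousOn).mul
        (hφ.continuous.continuousOn.mul (huC.continuous.continuousOn.inv₀ hune))
    · intro x hx; simp [hWdef, hgrad0 x hx, hφ0 x hx]
  have hWint : Integrable W := hInt W hWcont (fun x hx => by simp [hWdef, hgrad0 x hx, hφ0 x hx])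
  have hS1cont : Continuous S1 := by
    refine glue_cont hφc hφΩ ?_ ?_
    · exact ((hφ.continuous.pow 2).continuousOn).mul (huC.continuous.continuousOn.inv₀ hune)
    · intro x hx; simp [hS1def, hφ0 x hx]
  have hS1int : Integrable S1 := hInt S1 hS1cont (fun x hx => by simp [hS1def, hφ0 x hx])
  have hS2cont : Continuous S2 := by
    refine glue_cont hφc hφΩ ?_ ?_
    · exact (((contDiff_norm_sq ℝ (n := (⊤:ℕ∞))).continuous.continuousOn).mul
        ((hφ.continuous.pow 2).continuousOn)).mul
        ((huC.continuous.pow 2).continuousOn.inv₀ (fun x hx => pow_ne_zero 2 (hune x hx)))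
    · intro x hx; simp [hS2def, hφ0 x hx]
  have hS2int : Integrable S2 := hInt S2 hS2cont (fun x hx => by simp [hS2def, hφ0 x hx])
  have hφ2int : Integrable (fun x : E => φ x ^ 2) :=
    hInt _ (hφ.continuous.pow 2) (fun x hx => by simp [hφ0 x hx])
  have hgradnormint : Integrable (fun x : E => ‖gradient φ x‖ ^ 2) :=
    hInt _ ((hgradC.continuous.norm).pow 2) (fun x hx => by simp [hgrad0 x hx])
  -- derivative of gi on the ball
  have hgifd : ∀ x ∈ B, ∀ i, fderiv ℝ (gi i) x (e i)
      = φ x * (u x)⁻¹ + x i * (gradient φ x) i * (u x)⁻¹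
        + 2 * (x i) ^ 2 * φ x * ((u x) ^ 2)⁻¹ := by
    intro x hx i
    have hne : u x ≠ 0 := hune x hx
    have hu' : HasFDerivAt u
        ((0 : E →L[ℝ] ℝ) - (2 • ((innerSL ℝ x).comp (ContinuousLinearMap.id ℝ E)))) x :=
      (hasFDerivAt_const (1:ℝ) x).sub ((hasFDerivAt_id x).norm_sq)
    have hinv : HasFDerivAt (fun y : E => (u y)⁻¹)
        ((-((u x) ^ 2)⁻¹) • ((0 : E →L[ℝ] ℝ) - (2 • ((innerSL ℝ x).comp (ContinuousLinearMap.id ℝ E))))) x :=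
      (hasDerivAt_inv hne).comp_hasFDerivAt x hu'
    have hd : HasFDerivAt (fun y : E => φ y * (u y)⁻¹)
        (φ x • ((-((u x) ^ 2)⁻¹) • ((0 : E →L[ℝ] ℝ) - (2 • ((innerSL ℝ x).comp (ContinuousLinearMap.id ℝ E)))))
          + (u x)⁻¹ • fderiv ℝ φ x) x :=
      ((hφ.differentiable (by simp) x).hasFDerivAt).mul hinv
    have hgi' : HasFDerivAt (gi i)
        ((x i) • (φ x • ((-((u x) ^ 2)⁻¹) • ((0 : E →L[ℝ] ℝ) - (2 • ((innerSL ℝ x).comp (ContinuousLinearMap.id ℝ E)))))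
          + (u x)⁻¹ • fderiv ℝ φ x)
          + (φ x * (u x)⁻¹) • (EuclideanSpace.proj i : E →L[ℝ] ℝ)) x :=
      ((EuclideanSpace.proj i (𝕜 := ℝ)).hasFDerivAt).mul hd
    rw [hgi'.fderiv]
    have h2 : (inner ℝ x (e i) : ℝ) = x i := by
      rw [hedef, EuclideanSpace.inner_single_right]; simp
    have h3 : fderiv ℝ φ x (EuclideanSpace.single i 1) = gradient φ x i := hfdi x i
    have h2' : (inner ℝ x (EuclideanSpace.single i (1:ℝ)) : ℝ) = x i := h2
    simp only [ContinuousLinearMap.add_apply, ContinuousLinearMap.smul_apply,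
      ContinuousLinearMap.sub_apply, ContinuousLinearMap.zero_apply,
      ContinuousLinearMap.coe_smul', Pi.smul_apply, ContinuousLinearMap.comp_apply,
      ContinuousLinearMap.coe_id', id_eq, innerSL_apply_apply, hfdi, h2, h3, h2', smul_eq_mul,
      PiLp.proj_apply, hedef, EuclideanSpace.single_apply, if_pos rfl, if_true]
    ring
  -- integration by parts for each i
  obtain ⟨Cφ, hφlip⟩ := ContDiff.lipschitzWith_of_hasCompactSupport hφc hφ (by simp)
  have hibp : ∀ i, (∫ x, fderiv ℝ φ x (e i) * gi i x)
      = -∫ x, fderiv ℝ (gi i) x (e i) * φ x := by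
    intro i
    obtain ⟨Ci, hgilip⟩ :=
      ContDiff.lipschitzWith_of_hasCompactSupport (hgics i) (hgiC i) (by simp)
    have h := hφlip.integral_lineDeriv_mul_eq (μ := volume) hgilip (hgics i) (e i)
    have hl1 : ∀ x : E, lineDeriv ℝ φ x (e i) = fderiv ℝ φ x (e i) :=
      fun x => (hφ.differentiable (by simp) x).lineDeriv_eq_fderiv
    have hl2 : ∀ x : E, lineDeriv ℝ (gi i) x (-(e i)) = -(fderiv ℝ (gi i) x (e i)) := by
      intro x
      rw [((hgiC i).differentiable (by simp) x).lineDeriv_eq_fderiv, map_neg]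
    simp only [hl1, hl2, neg_mul] at h
    rw [h, integral_neg]
  -- integrability of the IBP integrands
  have hfderivφcont : Continuous (fun p : E × (Fin N → ℝ) => p) := continuous_id
  have hFAint : ∀ i, Integrable (fun x : E => fderiv ℝ φ x (e i) * gi i x) := by
    intro i
    refine hInt _ ?_ (fun x hx => by simp [hgidef, hφ0 x hx])
    have h1 : Continuous fun x : E => fderiv ℝ φ x (e i) := by
      simp only [hfdi]
      exact (EuclideanSpace.proj i (𝕜 := ℝ)).continuous.comp hgradC.continuous
    exact h1.mul (hgiC i).continuous
  have hFBint : ∀ i, Integrable (fun x : E => fderiv ℝ (gi i) x (e i) * φ x) := by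
    intro i
    refine hInt _ ?_ (fun x hx => by simp [hφ0 x hx])
    have h1 : Continuous fun x : E => fderiv ℝ (gi i) x (e i) :=
      ((hgiC i).continuous_fderiv (by simp)).clm_apply continuous_const
    exact h1.mul hφ.continuous
  -- summed identity
  have hsum : (∫ x, (∑ i, fderiv ℝ φ x (e i) * gi i x))
      = -∫ x, (∑ i, fderiv ℝ (gi i) x (e i) * φ x) := by
    rw [integral_finset_sum _ (fun i _ => hFAint i),
      integral_finset_sum _ (fun i _ => hFBint i)]
    rw [← Finset.sum_neg_distrib]
    exact Finset.sum_congr rfl (fun i _ => hibp i)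
  -- pointwise identification of the sums
  have hSA : ∀ x : E, (∑ i, fderiv ℝ φ x (e i) * gi i x) = W x := by
    intro x
    have : ∀ i, fderiv ℝ φ x (e i) * gi i x
        = (x i * gradient φ x i) * (φ x * (u x)⁻¹) := by
      intro i; rw [hfdi]; simp only [hgidef]; ring
    rw [Finset.sum_congr rfl (fun i _ => this i), ← Finset.sum_mul]
    have hinner : (inner ℝ x (gradient φ x) : ℝ) = ∑ i, x i * gradient φ x i := by
      simp [PiLp.inner_apply, RCLike.inner_apply, -inner_gradient_right]
      exact Finset.sum_congr rfl (fun i _ => mul_comm _ _)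
    simp only [hWdef]
    rw [hinner]
  have hSB : ∀ x : E, (∑ i, fderiv ℝ (gi i) x (e i) * φ x)
      = (N : ℝ) * S1 x + W x + 2 * S2 x := by
    intro x
    by_cases hx : x ∈ B
    · have hterm : ∀ i, fderiv ℝ (gi i) x (e i) * φ x
          = φ x ^ 2 * (u x)⁻¹ + (x i * gradient φ x i) * (φ x * (u x)⁻¹)
            + (x i * x i) * (2 * (φ x ^ 2 * ((u x) ^ 2)⁻¹)) := by
        intro i; rw [hgifd x hx i]; ring
      rw [Finset.sum_congr rfl (fun i _ => hterm i)]
      rw [Finset.sum_add_distrib, Finset.sum_add_distrib, Finset.sum_const,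
        ← Finset.sum_mul, ← Finset.sum_mul]
      have hinner : (inner ℝ x (gradient φ x) : ℝ) = ∑ i, x i * gradient φ x i := by
        simp [PiLp.inner_apply, RCLike.inner_apply, -inner_gradient_right]
        exact Finset.sum_congr rfl (fun i _ => mul_comm _ _)
      have hnorm : (∑ i, x i * x i) = ‖x‖ ^ 2 := by
        rw [← real_inner_self_eq_norm_sq]
        simp only [PiLp.inner_apply, RCLike.inner_apply, conj_trivial]
      simp only [Finset.card_univ, Fintype.card_fin, nsmul_eq_mul,
        hS1def, hWdef, hS2def]
      rw [hinner, hnorm]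
      ring
    · have hxK : x ∉ K := fun h => hx (hφΩ h)
      have h0 : φ x = 0 := hφ0 x hxK
      have hg0 : gradient φ x = 0 := hgrad0 x hxK
      simp [h0, hg0, hS1def, hWdef, hS2def]
  -- main integral identity : 2 ∫ W = - N ∫ S1 - 2 ∫ S2
  have hkey : 2 * (∫ x, W x) + 2 * (∫ x, S2 x) = -((N : ℝ) * ∫ x, S1 x) := by
    have hA : (∫ x, (∑ i, fderiv ℝ φ x (e i) * gi i x)) = ∫ x, W x :=
      integral_congr_ae (Filter.Eventually.of_forall hSA)
    have hB : (∫ x, (∑ i, fderiv ℝ (gi i) x (e i) * φ x))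
        = ∫ x, ((N : ℝ) * S1 x + W x + 2 * S2 x) :=
      integral_congr_ae (Filter.Eventually.of_forall hSB)
    have h1 : (∫ x, W x) = -∫ x, ((N : ℝ) * S1 x + W x + 2 * S2 x) := by
      rw [← hA, ← hB, hsum]
    have h2 : (∫ x, ((N : ℝ) * S1 x + W x + 2 * S2 x))
        = ((N : ℝ) * (∫ x, S1 x) + (∫ x, W x)) + 2 * ∫ x, S2 x := by
      rw [integral_add (f := fun x => (N : ℝ) * S1 x + W x) (g := fun x => 2 * S2 x)
          ((hS1int.const_mul _).add hWint) (hS2int.const_mul _),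
        integral_add (f := fun x => (N : ℝ) * S1 x) (g := W)
          (hS1int.const_mul _) hWint, integral_const_mul, integral_const_mul]
    rw [h2] at h1
    linarith
  -- pass to integrals over B
  have hrestr : ∀ f : E → ℝ, (∀ x ∉ K, f x = 0) → (∫ x in B, f x) = ∫ x, f x := by
    intro f h0
    exact setIntegral_eq_integral_of_forall_compl_eq_zero
      (fun x hx => h0 x (fun h => hx (hφΩ h)))
  have hWres : (∫ x in B, W x) = ∫ x, W x := hrestr W (fun x hx => by simp [hWdef, hgrad0 x hx, hφ0 x hx])
  have hS1res : (∫ x in B, S1 x) = ∫ x, S1 x := hrestr S1 (fun x hx => by simp [hS1def, hφ0 x hx])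
  have hS2res : (∫ x in B, S2 x) = ∫ x, S2 x := hrestr S2 (fun x hx => by simp [hS2def, hφ0 x hx])
  -- integrability of V φ² on B
  obtain ⟨M, hM⟩ : ∃ M, ∀ x ∈ K, ‖x‖ ^ 2 * ((u x) ^ 2)⁻¹ ≤ M := by
    have hcont : ContinuousOn (fun x : E => ‖x‖ ^ 2 * ((u x) ^ 2)⁻¹) K := by
      apply ContinuousOn.mul ((continuous_norm.pow 2).continuousOn)
      exact ContinuousOn.inv₀ ((huC.continuous.pow 2).continuousOn)
        (fun x hx => pow_ne_zero 2 (hune x (hφΩ hx)))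
    obtain ⟨M, hM⟩ := IsCompact.exists_bound_of_continuousOn hφc hcont
    refine ⟨M, fun x hx => le_trans (le_abs_self _) ?_⟩
    rw [← Real.norm_eq_abs]
    exact hM x hx
  have hVφint : IntegrableOn (fun x : E => V x * φ x ^ 2) B := by
    have hmeas : AEStronglyMeasurable (fun x : E => V x * φ x ^ 2) (volume.restrict B) :=
      ((hVmeas.mul ((hφ.continuous.measurable).pow_const 2)).aestronglyMeasurable)
    refine Integrable.mono' ((hφ2int.const_mul M).restrict) hmeas ?_
    filter_upwards [hV, ae_restrict_mem measurableSet_ball] with x hVx hxB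
    by_cases hxK : x ∈ K
    · have h1 : -(‖x‖ ^ 2 / (1 - ‖x‖ ^ 2) ^ 2) ≤ V x := hVx.1
      have h2 : V x ≤ 0 := hVx.2
      have h3 : ‖x‖ ^ 2 / (1 - ‖x‖ ^ 2) ^ 2 = ‖x‖ ^ 2 * ((u x) ^ 2)⁻¹ := by
        rw [div_eq_mul_inv]
      have h4 : |V x| ≤ M := by
        rw [abs_of_nonpos h2]
        have := hM x hxK
        rw [h3] at h1
        linarith
      have h5 : 0 ≤ φ x ^ 2 := sq_nonneg _
      calc ‖V x * φ x ^ 2‖ = |V x| * φ x ^ 2 := by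
            rw [Real.norm_eq_abs, abs_mul, abs_of_nonneg h5]
        _ ≤ M * φ x ^ 2 := by exact mul_le_mul_of_nonneg_right h4 h5
    · simp [hφ0 x hxK]
  have hgradres : IntegrableOn (fun x : E => ‖gradient φ x‖ ^ 2) B := hgradnormint.restrict
  -- pointwise inequality a.e. on B
  have hptwise : ∀ᵐ x ∂(volume.restrict B),
      -2 * W x - 2 * S2 x ≤ ‖gradient φ x‖ ^ 2 + V x * φ x ^ 2 := by
    filter_upwards [hV, ae_restrict_mem measurableSet_ball] with x hVx hxB
    have hne : u x ≠ 0 := hune x hxB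
    have hsq : (0:ℝ) ≤ ‖gradient φ x + (φ x * (u x)⁻¹) • x‖ ^ 2 := sq_nonneg _
    have hexp : ‖gradient φ x + (φ x * (u x)⁻¹) • x‖ ^ 2
        = ‖gradient φ x‖ ^ 2 + 2 * W x + S2 x := by
      rw [norm_add_sq_real]
      have h1 : (inner ℝ (gradient φ x) ((φ x * (u x)⁻¹) • x) : ℝ)
          = (φ x * (u x)⁻¹) * (inner ℝ x (gradient φ x) : ℝ) := by
        rw [real_inner_smul_right, real_inner_comm]
      have h2 : ‖(φ x * (u x)⁻¹) • x‖ ^ 2 = (φ x * (u x)⁻¹) ^ 2 * ‖x‖ ^ 2 := by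
        rw [norm_smul]
        simp [mul_pow, sq_abs]
      simp only [h1, h2, hWdef, hS2def, ← inv_pow]
      ring
    have hVlb : -(S2 x) ≤ V x * φ x ^ 2 := by
      have h1 : -(‖x‖ ^ 2 / (1 - ‖x‖ ^ 2) ^ 2) ≤ V x := hVx.1
      have h3 : ‖x‖ ^ 2 / (1 - ‖x‖ ^ 2) ^ 2 = ‖x‖ ^ 2 * ((u x) ^ 2)⁻¹ := by
        rw [div_eq_mul_inv]
      have h5 : 0 ≤ φ x ^ 2 := sq_nonneg _
      have := mul_le_mul_of_nonneg_right h1 h5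
      rw [h3] at this
      calc -(S2 x) = -(‖x‖ ^ 2 * ((u x) ^ 2)⁻¹) * φ x ^ 2 := by simp only [hS2def]; ring
        _ ≤ V x * φ x ^ 2 := this
    nlinarith [hsq, hexp]
  -- final chain
  have hIneq1 : (∫ x in B, (-2 * W x - 2 * S2 x))
      ≤ ∫ x in B, (‖gradient φ x‖ ^ 2 + V x * φ x ^ 2) := by
    refine integral_mono_ae ?_ ?_ hptwise
    · exact ((hWint.const_mul (-2)).sub (hS2int.const_mul 2)).restrict
    · exact hgradres.add hVφint
  have hsplit1 : (∫ x in B, (‖gradient φ x‖ ^ 2 + V x * φ x ^ 2))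
      = (∫ x in B, ‖gradient φ x‖ ^ 2) + ∫ x in B, V x * φ x ^ 2 :=
    integral_add hgradres hVφint
  have hsplit2 : (∫ x in B, (-2 * W x - 2 * S2 x))
      = -2 * (∫ x in B, W x) - 2 * (∫ x in B, S2 x) := by
    rw [integral_sub ((hWint.const_mul (-2)).restrict) ((hS2int.const_mul 2).restrict),
      integral_const_mul, integral_const_mul]
  have hS1lb : (∫ x in B, φ x ^ 2) ≤ ∫ x in B, S1 x := by
    refine integral_mono_ae (hφ2int.restrict) (hS1int.restrict) ?_
    filter_upwards [ae_restrict_mem measurableSet_ball] with x hxB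
    have hu1 : u x ≤ 1 := by
      show 1 - ‖x‖ ^ 2 ≤ 1
      nlinarith [sq_nonneg (‖x‖)]
    have hup : 0 < u x := hupos x hxB
    have : (1:ℝ) ≤ (u x)⁻¹ := (one_le_inv₀ hup).mpr hu1
    calc φ x ^ 2 = φ x ^ 2 * 1 := by ring
      _ ≤ φ x ^ 2 * (u x)⁻¹ := by
          exact mul_le_mul_of_nonneg_left this (sq_nonneg _)
      _ = S1 x := rfl
  have hNS1 : (N : ℝ) * (∫ x in B, φ x ^ 2) ≤ (N : ℝ) * ∫ x in B, S1 x :=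
    mul_le_mul_of_nonneg_left hS1lb (Nat.cast_nonneg N)
  have hfin : (N : ℝ) * (∫ x in B, S1 x) = -2 * (∫ x in B, W x) - 2 * (∫ x in B, S2 x) := by
    rw [hWres, hS1res, hS2res]
    linarith [hkey]
  linarith [hIneq1, hsplit1, hsplit2, hNS1, hfin]

end GSB

/-- **Application to the unit ball**: for potentials `V` with
`-|x|²/(1-|x|²)² ≤ V ≤ 0` a.e. on the unit ball `B₁ ⊆ ℝ^N`, the quadratic form of
`-Δ + V` is bounded below by `N ∫ φ²`. -/
theorem ground_state_ball {N : ℕ} (hN : 1 ≤ N)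
    {V : EuclideanSpace ℝ (Fin N) → ℝ} (hVmeas : Measurable V)
    (hV : ∀ᵐ x ∂(volume.restrict (Metric.ball (0 : EuclideanSpace ℝ (Fin N)) 1)),
      -(‖x‖ ^ 2 / (1 - ‖x‖ ^ 2) ^ 2) ≤ V x ∧ V x ≤ 0)
    (φ : EuclideanSpace ℝ (Fin N) → ℝ) (hφ : ContDiff ℝ (⊤ : ℕ∞) φ)
    (hφc : HasCompactSupport φ)
    (hφΩ : tsupport φ ⊆ Metric.ball (0 : EuclideanSpace ℝ (Fin N)) 1) :
    (N : ℝ) * (∫ x in Metric.ball (0 : EuclideanSpace ℝ (Fin N)) 1, (φ x) ^ 2)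
      ≤ (∫ x in Metric.ball (0 : EuclideanSpace ℝ (Fin N)) 1, ‖gradient φ x‖ ^ 2)
        + ∫ x in Metric.ball (0 : EuclideanSpace ℝ (Fin N)) 1, V x * (φ x) ^ 2 :=
  GSB.main hN hVmeas hV φ hφ hφc hφΩ
end

section
/- Let N ≥ 1 and let Ω = (−1,1) × ℝ^{N−1} ⊂ ℝ^N be the infinite slab. Let V : Ω → ℝ be measurable and satisfy −x₁²/(1 − x₁²)² ≤ V(x₁, x') ≤ 0 for almost every (x₁, x') ∈ Ω. Then for every smooth function φ : ℝ^N → ℝ with compact support contained in Ω one has ∫_Ω |∇φ|² dx + ∫_Ω V φ² dx ≥ ∫_Ω φ² dx. -/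
open MeasureTheory

/-- **Application to the infinite slab** `Ω = (-1,1) × ℝ^{N-1}`: for potentials `V` with
`-x₁²/(1-x₁²)² ≤ V ≤ 0` a.e. on `Ω`, the quadratic form of `-Δ + V` is bounded below
by `∫ φ²`. Here the slab is described inside `ℝ^N` as the set of points whose first
coordinate lies in `(-1, 1)`. -/
theorem ground_state_slab {N : ℕ} (hN : 1 ≤ N)
    (Ω : Set (EuclideanSpace ℝ (Fin N)))
    (hΩ : Ω = {x : EuclideanSpace ℝ (Fin N) | |x ⟨0, hN⟩| < 1})
    {V : EuclideanSpace ℝ (Fin N) → ℝ} (hVmeas : Measurable V)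
    (hV : ∀ᵐ x ∂(volume.restrict Ω),
      -((x ⟨0, hN⟩) ^ 2 / (1 - (x ⟨0, hN⟩) ^ 2) ^ 2) ≤ V x ∧ V x ≤ 0)
    (φ : EuclideanSpace ℝ (Fin N) → ℝ) (hφ : ContDiff ℝ (⊤ : ℕ∞) φ)
    (hφc : HasCompactSupport φ) (hφΩ : tsupport φ ⊆ Ω) :
    (∫ x in Ω, (φ x) ^ 2)
      ≤ (∫ x in Ω, ‖gradient φ x‖ ^ 2) + ∫ x in Ω, V x * (φ x) ^ 2 := by
  classical
  set i0 : Fin N := ⟨0, hN⟩ with hi0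
  set v : EuclideanSpace ℝ (Fin N) := EuclideanSpace.single i0 (1 : ℝ) with hvdef
  have hφd : Differentiable ℝ φ := hφ.differentiable (by simp)
  have hφcont : Continuous φ := hφ.continuous
  -- basic facts about Ω
  have hΩopen : IsOpen Ω := by
    rw [hΩ]
    exact isOpen_lt ((EuclideanSpace.proj (𝕜 := ℝ) i0).continuous.abs) continuous_const
  have hφ0 : ∀ x, x ∉ Ω → x ∉ tsupport φ := fun x hx hmem => hx (hφΩ hmem)
  have hsq_lt : ∀ x ∈ Ω, (x i0) ^ 2 < 1 := by
    intro x hx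
    rw [hΩ] at hx
    exact (sq_lt_one_iff_abs_lt_one _).2 hx
  have hpos : ∀ x ∈ Ω, 0 < 1 - (x i0) ^ 2 := fun x hx => sub_pos.2 (hsq_lt x hx)
  have hne : ∀ x ∈ Ω, (1 - (x i0) ^ 2) ≠ 0 := fun x hx => (hpos x hx).ne'
  -- the auxiliary functions
  set F : EuclideanSpace ℝ (Fin N) → ℝ := fun x => x i0 / (1 - (x i0) ^ 2) with hFdef
  set a : EuclideanSpace ℝ (Fin N) → ℝ := fun x => F x * φ x with hadef
  set Dφ : EuclideanSpace ℝ (Fin N) → ℝ := fun x => fderiv ℝ φ x v with hDφdef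
  -- smoothness of a
  have hts : ∀ x, x ∉ tsupport φ → φ x = 0 := fun x hx =>
    image_eq_zero_of_notMem_tsupport hx
  have hev0 : ∀ x, x ∉ tsupport φ → φ =ᶠ[nhds x] 0 := fun x hx =>
    notMem_tsupport_iff_eventuallyEq.1 hx
  have hprojC : ContDiff ℝ (⊤ : ℕ∞) fun x : EuclideanSpace ℝ (Fin N) => x i0 :=
    (EuclideanSpace.proj (𝕜 := ℝ) i0).contDiff
  have ha : ContDiff ℝ (⊤ : ℕ∞) a := by
    rw [contDiff_iff_contDiffAt]
    intro x
    by_cases hx : x ∈ Ω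
    · exact ((hprojC.contDiffAt.div
        (contDiffAt_const.sub (hprojC.contDiffAt.pow 2)) (hne x hx)).mul hφ.contDiffAt)
    · apply (contDiffAt_const (c := (0 : ℝ))).congr_of_eventuallyEq
      filter_upwards [hev0 x (hφ0 x hx)] with y hy
      simp [hadef, hy]
  have had : Differentiable ℝ a := ha.differentiable (by simp)
  have hacont : Continuous a := ha.continuous
  set Da : EuclideanSpace ℝ (Fin N) → ℝ := fun x => fderiv ℝ a x v with hDadef
  set Q : EuclideanSpace ℝ (Fin N) → ℝ := fun x => Da x * φ x - a x * Dφ x with hQdef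
  -- continuity of derivatives
  have hDφcont : Continuous Dφ := (hφ.continuous_fderiv (by simp)).clm_apply continuous_const
  have hDacont : Continuous Da := (ha.continuous_fderiv (by simp)).clm_apply continuous_const
  -- vanishing off tsupport φ
  have ha0 : ∀ x, x ∉ tsupport φ → a x = 0 := fun x hx => by simp [hadef, hts x hx]
  have hDφ0 : ∀ x, x ∉ tsupport φ → Dφ x = 0 := fun x hx => by
    simp [hDφdef, fderiv_of_notMem_tsupport (𝕜 := ℝ) hx]
  have hsupa : tsupport a ⊆ tsupport φ := by
    apply closure_minimal _ isClosed_closure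
    intro x hx
    by_contra h
    exact hx (by simp [hadef, hts x h])
  have hDa0 : ∀ x, x ∉ tsupport φ → Da x = 0 := fun x hx => by
    simp [hDadef, fderiv_of_notMem_tsupport (𝕜 := ℝ) (fun h => hx (hsupa h))]
  -- compact support of a
  have ha_s : HasCompactSupport a :=
    HasCompactSupport.of_support_subset_isCompact hφc
      (fun x hx => by
        by_contra h
        exact (Function.mem_support.1 hx) (ha0 x h))
  -- Lipschitz
  obtain ⟨C₁, hLφ⟩ := ContDiff.lipschitzWith_of_hasCompactSupport hφc hφ (by simp)
  obtain ⟨C₂, hLa⟩ := ContDiff.lipschitzWith_of_hasCompactSupport ha_s ha (by simp)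
  -- integrability helper
  have key : ∀ g : EuclideanSpace ℝ (Fin N) → ℝ, Continuous g →
      (∀ x, x ∉ tsupport φ → g x = 0) → Integrable g volume := by
    intro g hg h0
    apply hg.integrable_of_hasCompactSupport
    apply HasCompactSupport.of_support_subset_isCompact hφc
    intro x hx
    by_contra h
    exact (Function.mem_support.1 hx) (h0 x h)
  have intφ2 : Integrable (fun x => φ x ^ 2) volume :=
    key _ (hφcont.pow 2) (fun x hx => by simp [hts x hx])
  have intDφ2 : Integrable (fun x => Dφ x ^ 2) volume :=
    key _ (hDφcont.pow 2) (fun x hx => by simp [hDφ0 x hx])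
  have inta2 : Integrable (fun x => a x ^ 2) volume :=
    key _ (hacont.pow 2) (fun x hx => by simp [ha0 x hx])
  have intP : Integrable (fun x => a x * Dφ x) volume :=
    key _ (hacont.mul hDφcont) (fun x hx => by simp [ha0 x hx])
  have intQ : Integrable Q volume :=
    key _ ((hDacont.mul hφcont).sub (hacont.mul hDφcont))
      (fun x hx => by simp [hQdef, ha0 x hx, hts x hx])
  have hgradnorm : ∀ x, ‖gradient φ x‖ = ‖fderiv ℝ φ x‖ := fun x =>
    LinearIsometryEquiv.norm_map _ _
  have intgrad : Integrable (fun x => ‖gradient φ x‖ ^ 2) volume := by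
    have hrw : (fun x => ‖gradient φ x‖ ^ 2) = fun x => ‖fderiv ℝ φ x‖ ^ 2 := by
      funext x; rw [hgradnorm x]
    rw [hrw]
    exact key _ (((hφ.continuous_fderiv (by simp)).norm).pow 2)
      (fun x hx => by simp [fderiv_of_notMem_tsupport (𝕜 := ℝ) hx])
  -- pointwise derivative formula on Ω
  have hDa_eq : ∀ x ∈ Ω, Da x
      = F x * Dφ x + φ x * ((1 + (x i0) ^ 2) / (1 - (x i0) ^ 2) ^ 2) := by
    intro x hx
    have ht := hne x hx
    have h1 : HasDerivAt (fun s : ℝ => s / (1 - s ^ 2))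
        ((1 + (x i0) ^ 2) / (1 - (x i0) ^ 2) ^ 2) (x i0) := by
      have h := (hasDerivAt_id (x i0)).div
        ((hasDerivAt_const (x i0) (1 : ℝ)).sub (hasDerivAt_pow 2 (x i0))) ht
      exact h.congr_deriv (by simp only [id_eq, Pi.sub_apply]; push_cast; ring)
    have hproj' : HasFDerivAt (fun y : EuclideanSpace ℝ (Fin N) => y i0)
        (EuclideanSpace.proj (𝕜 := ℝ) i0) x := (EuclideanSpace.proj (𝕜 := ℝ) i0).hasFDerivAt
    have h3 : HasFDerivAt a
        (F x • fderiv ℝ φ x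
          + φ x • (((1 + (x i0) ^ 2) / (1 - (x i0) ^ 2) ^ 2) •
              (EuclideanSpace.proj (𝕜 := ℝ) i0))) x := by
      exact (h1.comp_hasFDerivAt x hproj').mul (hφd x).hasFDerivAt
    have h4 : Da x = (F x • fderiv ℝ φ x
          + φ x • (((1 + (x i0) ^ 2) / (1 - (x i0) ^ 2) ^ 2) •
              (EuclideanSpace.proj (𝕜 := ℝ) i0))) v := by
      simp only [hDadef]
      rw [h3.fderiv]
    rw [h4]
    have hv1 : (EuclideanSpace.proj (𝕜 := ℝ) i0) v = 1 := by
      simp [hvdef, EuclideanSpace.single_apply]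
    simp [ContinuousLinearMap.add_apply, ContinuousLinearMap.smul_apply, hv1,
      smul_eq_mul, hDφdef]
  -- unconditional identity for a²
  have ha2all : ∀ x, a x ^ 2 = (x i0) ^ 2 / (1 - (x i0) ^ 2) ^ 2 * φ x ^ 2 := by
    intro x
    simp only [hadef, hFdef]
    rw [mul_pow, div_pow]
  -- pointwise key inequality
  have hptwise : ∀ x, φ x ^ 2 ≤ Q x - 2 * a x ^ 2 := by
    intro x
    by_cases hx0 : φ x = 0
    · have hax : a x = 0 := by simp [hadef, hx0]
      simp [hQdef, hx0, hax]
    · have hx : x ∈ Ω := hφΩ (subset_tsupport φ (Function.mem_support.2 hx0))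
      have hu : 0 < 1 - (x i0) ^ 2 := hpos x hx
      have hQx : Q x = (1 + (x i0) ^ 2) / (1 - (x i0) ^ 2) ^ 2 * φ x ^ 2 := by
        simp only [hQdef]
        rw [hDa_eq x hx]
        ring
      have hcomb : Q x - 2 * a x ^ 2 = (1 / (1 - (x i0) ^ 2)) * φ x ^ 2 := by
        rw [hQx, ha2all x]
        field_simp
        ring
      rw [hcomb]
      have h1u : (1 : ℝ) ≤ 1 / (1 - (x i0) ^ 2) := by
        rw [le_div_iff₀ hu]
        nlinarith [sq_nonneg (x i0)]
      nlinarith [sq_nonneg (φ x)]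
  -- integration by parts
  have hIBP : ∫ x, Q x = -2 * ∫ x, a x * Dφ x := by
    have h0 := hLa.integral_lineDeriv_mul_eq (μ := volume) hLφ hφc v
    have hl : (fun x => lineDeriv ℝ a x v * φ x) = fun x => Q x + a x * Dφ x := by
      funext x
      rw [(had x).lineDeriv_eq_fderiv]
      simp only [hQdef, hDadef]
      ring
    have hr : (fun x => lineDeriv ℝ φ x (-v) * a x) = fun x => -(a x * Dφ x) := by
      funext x
      rw [(hφd x).lineDeriv_eq_fderiv, map_neg]
      simp only [hDφdef]
      ring
    rw [hl, hr, integral_add intQ intP, integral_neg] at h0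
    linarith
  -- expansion of the square
  have hsq : (0 : ℝ) ≤ ∫ x, (Dφ x + a x) ^ 2 := integral_nonneg fun x => sq_nonneg _
  have hexp : ∫ x, (Dφ x + a x) ^ 2
      = (∫ x, Dφ x ^ 2) + 2 * (∫ x, a x * Dφ x) + ∫ x, a x ^ 2 := by
    have hrw : (fun x => (Dφ x + a x) ^ 2)
        = fun x => Dφ x ^ 2 + (2 * (a x * Dφ x) + a x ^ 2) := by
      funext x; ring
    rw [hrw, integral_add intDφ2 (show Integrable (fun x => 2 * (a x * Dφ x) + a x ^ 2) volume from (intP.const_mul 2).add inta2),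
      integral_add (intP.const_mul 2) inta2, integral_const_mul]
    ring
  -- the main inequality on full space
  have hQint : (∫ x, φ x ^ 2) ≤ (∫ x, Q x) - 2 * ∫ x, a x ^ 2 := by
    have h := integral_mono intφ2 (show Integrable (fun x => Q x - 2 * a x ^ 2) volume from intQ.sub (inta2.const_mul 2)) hptwise
    rwa [integral_sub intQ (inta2.const_mul 2), integral_const_mul] at h
  have hmain : (∫ x, φ x ^ 2) + (∫ x, a x ^ 2) ≤ ∫ x, Dφ x ^ 2 := by
    have := hsq
    rw [hexp] at this
    linarith
  -- passing from full-space integrals to integrals over Ω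
  have e1 : ∫ x in Ω, φ x ^ 2 = ∫ x, φ x ^ 2 :=
    setIntegral_eq_integral_of_forall_compl_eq_zero
      (fun x hx => by simp [hts x (hφ0 x hx)])
  have e2 : ∫ x in Ω, Dφ x ^ 2 = ∫ x, Dφ x ^ 2 :=
    setIntegral_eq_integral_of_forall_compl_eq_zero
      (fun x hx => by simp [hDφ0 x (hφ0 x hx)])
  have e3 : ∫ x in Ω, a x ^ 2 = ∫ x, a x ^ 2 :=
    setIntegral_eq_integral_of_forall_compl_eq_zero
      (fun x hx => by simp [ha0 x (hφ0 x hx)])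
  -- gradient bound
  have hgradmono : (∫ x in Ω, Dφ x ^ 2) ≤ ∫ x in Ω, ‖gradient φ x‖ ^ 2 := by
    apply integral_mono intDφ2.restrict intgrad.restrict
    intro x
    have h1 : |Dφ x| ≤ ‖gradient φ x‖ := by
      rw [hgradnorm x]
      calc |Dφ x| = ‖fderiv ℝ φ x v‖ := rfl
        _ ≤ ‖fderiv ℝ φ x‖ * ‖v‖ := (fderiv ℝ φ x).le_opNorm v
        _ = ‖fderiv ℝ φ x‖ := by
            rw [hvdef, EuclideanSpace.norm_single]
            simp
    calc Dφ x ^ 2 = |Dφ x| ^ 2 := (sq_abs _).symm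
      _ ≤ ‖gradient φ x‖ ^ 2 := by
          exact pow_le_pow_left₀ (abs_nonneg _) h1 2
  -- potential bound
  have hVint : Integrable (fun x => V x * φ x ^ 2) (volume.restrict Ω) := by
    apply Integrable.mono' inta2.restrict
      ((hVmeas.mul ((hφcont.pow 2).measurable)).aestronglyMeasurable)
    filter_upwards [hV] with x hx
    have hb : (0 : ℝ) ≤ (x i0) ^ 2 / (1 - (x i0) ^ 2) ^ 2 := by positivity
    have h1 : |V x| ≤ (x i0) ^ 2 / (1 - (x i0) ^ 2) ^ 2 :=
      abs_le.2 ⟨by linarith [hx.1], by linarith [hx.2]⟩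
    calc ‖V x * φ x ^ 2‖ = |V x| * φ x ^ 2 := by
          rw [Real.norm_eq_abs, abs_mul, abs_of_nonneg (sq_nonneg (φ x))]
      _ ≤ (x i0) ^ 2 / (1 - (x i0) ^ 2) ^ 2 * φ x ^ 2 :=
          mul_le_mul_of_nonneg_right h1 (sq_nonneg _)
      _ = a x ^ 2 := (ha2all x).symm
  have hVlow : (∫ x in Ω, -(a x ^ 2)) ≤ ∫ x in Ω, V x * φ x ^ 2 := by
    apply integral_mono_ae (show Integrable (fun x => -(a x ^ 2)) (volume.restrict Ω) from inta2.restrict.neg) hVint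
    filter_upwards [hV] with x hx
    rw [ha2all x]
    have := mul_le_mul_of_nonneg_right hx.1 (sq_nonneg (φ x))
    linarith [this]
  rw [integral_neg] at hVlow
  -- conclusion
  linarith [hgradmono, hVlow, hmain, e1, e2, e3]
end

section
/- Let N ≥ 2 and let Ω = { (x', x_N) ∈ ℝ^{N−1} × ℝ : |x'| < 1 } be the rectilinear wave-guide with circular cross-section. Let V : Ω → ℝ be measurable and satisfy −|x'|²/(1 − |x'|²)² ≤ V(x', x_N) ≤ 0 for almost every (x', x_N) ∈ Ω. Then for every smooth function φ : ℝ^N → ℝ with compact support contained in Ω one has ∫_Ω |∇φ|² dx + ∫_Ω V φ² dx ≥ (N − 1) · ∫_Ω φ² dx. -/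
open MeasureTheory
open Finset

open MeasureTheory Finset

namespace GSW

/-- index set of the first `N-1` coordinates -/
def Sf (N : ℕ) : Finset (Fin N) := Finset.univ.filter (fun i : Fin N => (i : ℕ) < N - 1)

lemma card_Sf {N : ℕ} (hN : 1 ≤ N) : (Sf N).card = N - 1 := by
  obtain ⟨M, rfl⟩ : ∃ M, N = M + 1 := ⟨N - 1, by omega⟩
  have h : Sf (M + 1) = Finset.univ.filter (fun i : Fin (M+1) => i ≠ Fin.last M) := by
    apply Finset.filter_congr
    intro i _
    have := i.isLt
    rw [Ne, Fin.ext_iff, Fin.val_last]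
    omega
  rw [h, Finset.filter_ne', Finset.card_erase_of_mem (Finset.mem_univ _), Finset.card_univ,
    Fintype.card_fin]

/-- sum of squares of the first `N-1` coordinates -/
noncomputable def Qf {N : ℕ} (x : EuclideanSpace ℝ (Fin N)) : ℝ := ∑ i ∈ Sf N, x i * x i

lemma Qf_nonneg {N : ℕ} (x : EuclideanSpace ℝ (Fin N)) : 0 ≤ Qf x :=
  Finset.sum_nonneg fun i _ => mul_self_nonneg _

lemma contDiff_Qf {N : ℕ} : ContDiff ℝ (⊤ : ℕ∞) (Qf (N := N)) := by
  apply ContDiff.sum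
  intro i _
  have h := ((EuclideanSpace.proj (𝕜 := ℝ) i).contDiff (n := (⊤ : ℕ∞))).mul
    ((EuclideanSpace.proj (𝕜 := ℝ) i).contDiff (n := (⊤ : ℕ∞)))
  simpa [PiLp.proj_apply] using h

/-- the derivative of `Qf` at `x` -/
noncomputable def Qd {N : ℕ} (x : EuclideanSpace ℝ (Fin N)) :
    EuclideanSpace ℝ (Fin N) →L[ℝ] ℝ :=
  ∑ i ∈ Sf N, (2 * x i) • (EuclideanSpace.proj i : EuclideanSpace ℝ (Fin N) →L[ℝ] ℝ)

lemma hasFDerivAt_Qf {N : ℕ} (x : EuclideanSpace ℝ (Fin N)) : HasFDerivAt Qf (Qd x) x := by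
  apply HasFDerivAt.fun_sum
  intro i _
  have h := ((EuclideanSpace.proj (𝕜 := ℝ) i).hasFDerivAt (x := x)).fun_mul
    ((EuclideanSpace.proj (𝕜 := ℝ) i).hasFDerivAt (x := x))
  simp only [PiLp.proj_apply] at h
  refine h.congr_fderiv ?_
  ext v
  simp only [ContinuousLinearMap.smul_apply, ContinuousLinearMap.add_apply, smul_eq_mul]
  ring

lemma Qd_single {N : ℕ} (x : EuclideanSpace ℝ (Fin N)) {j : Fin N} (hj : j ∈ Sf N) :
    Qd x (EuclideanSpace.single j 1) = 2 * x j := by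
  rw [Qd, ContinuousLinearMap.sum_apply]
  rw [Finset.sum_eq_single_of_mem j hj]
  · simp [PiLp.proj_apply, EuclideanSpace.single_apply]
  · intro i _ hij
    simp [PiLp.proj_apply, EuclideanSpace.single_apply]
    intro h; exact absurd h hij

end GSW

namespace GSW

variable {N : ℕ}

/-- smooth cutoff times `(1-Qf)⁻¹`: equals `(1-Qf)⁻¹` where `Qf ≤ b`, vanishes where `Qf ≥ b'` -/
noncomputable def cf (b b' : ℝ) (x : EuclideanSpace ℝ (Fin N)) : ℝ :=
  Real.smoothTransition ((b' - Qf x) / (b' - b)) * (1 - Qf x)⁻¹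

lemma contDiff_cf {b b' : ℝ} (hbb' : b < b') (hb'1 : b' < 1) :
    ContDiff ℝ (⊤ : ℕ∞) (cf (N := N) b b') := by
  rw [contDiff_iff_contDiffAt]
  intro x
  rcases lt_or_ge (Qf x) 1 with hx | hx
  · apply ContDiffAt.mul
    · exact (Real.smoothTransition.contDiff.comp
        ((contDiff_const.sub contDiff_Qf).div_const _)).contDiffAt
    · exact ((contDiff_const.sub contDiff_Qf).contDiffAt).inv (by linarith)
  · have hopen : IsOpen {y : EuclideanSpace ℝ (Fin N) | b' < Qf y} :=
      isOpen_lt continuous_const contDiff_Qf.continuous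
    have hmem : {y : EuclideanSpace ℝ (Fin N) | b' < Qf y} ∈ nhds x :=
      hopen.mem_nhds (by simp only [Set.mem_setOf_eq]; linarith)
    have heq : cf b b' =ᶠ[nhds x] (fun _ => 0) := by
      filter_upwards [hmem] with y hy
      have hy' : b' < Qf y := hy
      have : (b' - Qf y) / (b' - b) ≤ 0 :=
        div_nonpos_of_nonpos_of_nonneg (by linarith) (by linarith)
      simp [cf, Real.smoothTransition.zero_of_nonpos this]
    exact (contDiffAt_const (c := (0:ℝ))).congr_of_eventuallyEq heq

lemma cf_eq {b b' : ℝ} (hbb' : b < b') {x : EuclideanSpace ℝ (Fin N)} (hx : Qf x ≤ b) :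
    cf b b' x = (1 - Qf x)⁻¹ := by
  have h1 : (1:ℝ) ≤ (b' - Qf x) / (b' - b) := (one_le_div (by linarith)).2 (by linarith)
  rw [cf, Real.smoothTransition.one_of_one_le h1, one_mul]

lemma sum_fderiv_g {b b' : ℝ} (hN : 1 ≤ N) (hbb' : b < b') (hb'1 : b' < 1)
    {x : EuclideanSpace ℝ (Fin N)} (hx : Qf x < b) :
    ∑ i ∈ Sf N, fderiv ℝ (fun y => cf b b' y * y i) x (EuclideanSpace.single i 1)
      = ((N : ℝ) - 1) * (1 - Qf x)⁻¹ + 2 * Qf x * ((1 - Qf x) ^ 2)⁻¹ := by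
  have hx1 : Qf x < 1 := by linarith
  have hne : (1 : ℝ) - Qf x ≠ 0 := by intro h; rw [sub_eq_zero] at h; linarith
  have hopen : IsOpen {y : EuclideanSpace ℝ (Fin N) | Qf y < b} :=
    isOpen_lt contDiff_Qf.continuous continuous_const
  have hmem : {y : EuclideanSpace ℝ (Fin N) | Qf y < b} ∈ nhds x := hopen.mem_nhds hx
  have hQ1 : HasFDerivAt (fun y : EuclideanSpace ℝ (Fin N) => 1 - Qf y) (-(Qd x)) x :=
    (hasFDerivAt_Qf x).const_sub 1
  have hinv : HasFDerivAt (fun y : EuclideanSpace ℝ (Fin N) => (1 - Qf y)⁻¹)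
      ((-(((1 : ℝ) - Qf x) ^ 2)⁻¹) • (-(Qd x))) x :=
    (hasDerivAt_inv hne).comp_hasFDerivAt x hQ1
  have key : ∀ i ∈ Sf N, fderiv ℝ (fun y => cf b b' y * y i) x (EuclideanSpace.single i 1)
      = (1 - Qf x)⁻¹ + (x i * x i) * (2 * (((1 - Qf x) ^ 2)⁻¹)) := by
    intro i hi
    have heq : (fun y : EuclideanSpace ℝ (Fin N) => cf b b' y * y i)
        =ᶠ[nhds x] (fun y => (1 - Qf y)⁻¹ * y i) := by
      filter_upwards [hmem] with y hy
      rw [cf_eq hbb' (le_of_lt hy)]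
    rw [heq.fderiv_eq]
    have hmul := hinv.fun_mul ((EuclideanSpace.proj (𝕜 := ℝ) i).hasFDerivAt (x := x))
    simp only [PiLp.proj_apply] at hmul
    rw [hmul.fderiv]
    have hself : EuclideanSpace.single i (1:ℝ) i = 1 := by
      simp [EuclideanSpace.single_apply]
    simp only [ContinuousLinearMap.add_apply, ContinuousLinearMap.smul_apply,
      ContinuousLinearMap.neg_apply, PiLp.proj_apply, Qd_single x hi, hself, smul_eq_mul]
    ring
  rw [Finset.sum_congr rfl key, Finset.sum_add_distrib, Finset.sum_const, ← Finset.sum_mul]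
  rw [card_Sf hN]
  have : ((Qf x : ℝ)) = ∑ i ∈ Sf N, x i * x i := rfl
  rw [← this, nsmul_eq_mul]
  have hcast : ((N - 1 : ℕ) : ℝ) = (N : ℝ) - 1 := by
    push_cast [hN]; ring
  rw [hcast]
  ring

end GSW

namespace GSW

noncomputable def gf {N : ℕ} (b b' : ℝ) (i : Fin N) (y : EuclideanSpace ℝ (Fin N)) : ℝ :=
  cf b b' y * y i

lemma contDiff_gf {N : ℕ} {b b' : ℝ} (hbb' : b < b') (hb'1 : b' < 1) (i : Fin N) :
    ContDiff ℝ (⊤ : ℕ∞) (gf b b' i) := by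
  apply (contDiff_cf hbb' hb'1).mul
  simpa [PiLp.proj_apply] using (EuclideanSpace.proj (𝕜 := ℝ) i).contDiff (n := (⊤ : ℕ∞))

lemma sum_fderiv_gf {N : ℕ} {b b' : ℝ} (hN : 1 ≤ N) (hbb' : b < b') (hb'1 : b' < 1)
    {x : EuclideanSpace ℝ (Fin N)} (hx : Qf x < b) :
    ∑ i ∈ Sf N, fderiv ℝ (gf b b' i) x (EuclideanSpace.single i 1)
      = ((N : ℝ) - 1) * (1 - Qf x)⁻¹ + 2 * Qf x * ((1 - Qf x) ^ 2)⁻¹ :=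
  sum_fderiv_g hN hbb' hb'1 hx

end GSW

open GSW

/-- The Euclidean norm of the cross-section part `x' = (x₁, …, x_{N-1})` of a point
`x = (x', x_N) ∈ ℝ^N`, i.e. of the vector of all coordinates except the last one. -/
noncomputable def crossNorm {N : ℕ} (x : EuclideanSpace ℝ (Fin N)) : ℝ :=
  Real.sqrt (∑ i ∈ Finset.univ.filter (fun i : Fin N => (i : ℕ) < N - 1), (x i) ^ 2)

set_option maxHeartbeats 1000000 in
/-- **Application to the rectilinear wave-guide with circular cross-section**
`Ω = {(x', x_N) : |x'| < 1}`: for potentials `V` with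
`-|x'|²/(1-|x'|²)² ≤ V ≤ 0` a.e. on `Ω`, the quadratic form of `-Δ + V` is bounded
below by `(N-1) ∫ φ²`. -/
theorem ground_state_waveguide {N : ℕ} (hN : 2 ≤ N)
    (Ω : Set (EuclideanSpace ℝ (Fin N)))
    (hΩ : Ω = {x : EuclideanSpace ℝ (Fin N) | crossNorm x < 1})
    {V : EuclideanSpace ℝ (Fin N) → ℝ} (hVmeas : Measurable V)
    (hV : ∀ᵐ x ∂(volume.restrict Ω),
      -((crossNorm x) ^ 2 / (1 - (crossNorm x) ^ 2) ^ 2) ≤ V x ∧ V x ≤ 0)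
    (φ : EuclideanSpace ℝ (Fin N) → ℝ) (hφ : ContDiff ℝ (⊤ : ℕ∞) φ)
    (hφc : HasCompactSupport φ) (hφΩ : tsupport φ ⊆ Ω) :
    ((N : ℝ) - 1) * (∫ x in Ω, (φ x) ^ 2)
      ≤ (∫ x in Ω, ‖gradient φ x‖ ^ 2) + ∫ x in Ω, V x * (φ x) ^ 2 := by
  classical
  have hN1 : 1 ≤ N := by omega
  -- basic facts about crossNorm and Qf
  have hcrQ : ∀ x : EuclideanSpace ℝ (Fin N), crossNorm x ^ 2 = Qf x := by
    intro x
    have h0 : (∑ i ∈ Finset.univ.filter (fun i : Fin N => (i : ℕ) < N - 1), (x i) ^ 2) = Qf x := by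
      rw [Qf, Sf]
      exact Finset.sum_congr rfl fun i _ => sq (x i)
    rw [crossNorm, Real.sq_sqrt (h0 ▸ (h0.symm ▸ Qf_nonneg x)), h0]
  have hΩQ : Ω = {x : EuclideanSpace ℝ (Fin N) | Qf x < 1} := by
    rw [hΩ]
    ext x
    simp only [Set.mem_setOf_eq]
    rw [← hcrQ x]
    have hcr0 : 0 ≤ crossNorm x := Real.sqrt_nonneg _
    constructor
    · intro h; nlinarith
    · intro h; nlinarith
  have hQcont : Continuous (Qf (N := N)) := contDiff_Qf.continuous
  have hΩopen : IsOpen Ω := by rw [hΩQ]; exact isOpen_lt hQcont continuous_const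
  have hΩmeas : MeasurableSet Ω := hΩopen.measurableSet
  have hone : ((⊤ : ℕ∞) : WithTop ℕ∞) ≠ 0 := by simp
  have hφcont : Continuous φ := hφ.continuous
  have hφzero : ∀ x ∉ Ω, φ x = 0 := by
    intro x hx
    by_contra h
    exact hx (hφΩ (subset_tsupport φ (Function.mem_support.2 h)))
  -- trivial case: empty support
  rcases (tsupport φ).eq_empty_or_nonempty with hKe | hKne
  · have hφ0 : ∀ x, φ x = 0 := by
      intro x
      apply image_eq_zero_of_notMem_tsupport
      simp [hKe]
    have h1 : (∫ x in Ω, (φ x) ^ 2) = 0 := by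
      simp [hφ0]
    have h2 : (∫ x in Ω, V x * (φ x) ^ 2) = 0 := by
      simp [hφ0]
    rw [h1, h2]
    have : 0 ≤ ∫ x in Ω, ‖gradient φ x‖ ^ 2 :=
      integral_nonneg fun x => by positivity
    linarith
  -- choose the cutoff thresholds
  obtain ⟨x₀, hx₀K, hx₀max⟩ :=
    (hφc : IsCompact (tsupport φ)).exists_isMaxOn hKne hQcont.continuousOn
  set b₀ : ℝ := Qf x₀ with hb₀def
  have hb₀0 : 0 ≤ b₀ := Qf_nonneg x₀
  have hb₀1 : b₀ < 1 := by
    have := hφΩ hx₀K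
    rw [hΩQ] at this
    exact this
  set b : ℝ := (b₀ + 1) / 2 with hbdef
  set b' : ℝ := (b₀ + 3) / 4 with hb'def
  have hb₀b : b₀ < b := by rw [hbdef]; linarith
  have hbb' : b < b' := by rw [hbdef, hb'def]; linarith
  have hb'1 : b' < 1 := by rw [hb'def]; linarith
  have hb1 : b < 1 := by linarith
  -- support facts
  have hKb : ∀ x, φ x ≠ 0 → Qf x < b := by
    intro x hx
    exact lt_of_le_of_lt (hx₀max (subset_tsupport φ (Function.mem_support.2 hx))) hb₀b
  have hKb₀ : ∀ x, φ x ≠ 0 → Qf x ≤ b₀ := by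
    intro x hx
    exact hx₀max (subset_tsupport φ (Function.mem_support.2 hx))
  -- helper: compact support and integrability
  have hcs2 : ∀ {f : EuclideanSpace ℝ (Fin N) → ℝ},
      (∀ x, x ∉ tsupport φ → f x = 0) → HasCompactSupport f := by
    intro f h
    apply IsCompact.of_isClosed_subset hφc (isClosed_closure)
    apply closure_minimal _ (isClosed_tsupport φ)
    intro x hx
    by_contra h2
    exact hx (h x h2)
  have hInt : ∀ {f : EuclideanSpace ℝ (Fin N) → ℝ},
      Continuous f → (∀ x, x ∉ tsupport φ → f x = 0) → Integrable f volume := by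
    intro f hc h0
    exact hc.integrable_of_hasCompactSupport (hcs2 h0)
  have hφz : ∀ x, x ∉ tsupport φ → φ x = 0 := fun x hx => image_eq_zero_of_notMem_tsupport hx
  have hdz : ∀ x, x ∉ tsupport φ → fderiv ℝ φ x = 0 := by
    intro x hx
    by_contra h
    exact hx (support_fderiv_subset ℝ (Function.mem_support.2 h))
  -- the vector field components
  have hcC : ContDiff ℝ (⊤ : ℕ∞) (cf (N := N) b b') := contDiff_cf hbb' hb'1
  have hgC : ∀ i : Fin N, ContDiff ℝ (⊤ : ℕ∞) (gf b b' i) := contDiff_gf hbb' hb'1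
  have hgcont : ∀ i : Fin N, Continuous (gf b b' i) := fun i => (hgC i).continuous
  -- derivative of φ²
  have hφdiff : Differentiable ℝ φ := hφ.differentiable hone
  have hp2C : ContDiff ℝ (⊤ : ℕ∞) (fun y => φ y ^ 2) := hφ.pow 2
  have hp2diff : Differentiable ℝ (fun y => φ y ^ 2) := hp2C.differentiable hone
  have hP2 : ∀ x, fderiv ℝ (fun y => φ y ^ 2) x = (2 * φ x) • fderiv ℝ φ x := by
    intro x
    have h := ((hφdiff x).hasFDerivAt).fun_mul ((hφdiff x).hasFDerivAt)
    have h2 : HasFDerivAt (fun y => φ y ^ 2) ((2 * φ x) • fderiv ℝ φ x) x := by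
      have heq : (fun y => φ y ^ 2) = fun y => φ y * φ y := by
        funext y; ring
      rw [heq]
      refine h.congr_fderiv ?_
      ext v
      simp only [ContinuousLinearMap.smul_apply, ContinuousLinearMap.add_apply, smul_eq_mul]
      ring
    exact h2.fderiv
  -- abbreviations
  set S : Finset (Fin N) := Sf N with hSdef
  set eI : Fin N → EuclideanSpace ℝ (Fin N) := fun i => EuclideanSpace.single i (1 : ℝ) with heIdef
  set A : EuclideanSpace ℝ (Fin N) → ℝ :=
    fun x => ∑ i ∈ S, fderiv ℝ (gf b b' i) x (eI i) with hAdef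
  have hAcont : Continuous A := by
    apply continuous_finset_sum
    intro i _
    exact (((hgC i).continuous_fderiv hone).clm_apply continuous_const)
  -- continuity of fderiv applications
  have hdφcont : ∀ v, Continuous fun x => fderiv ℝ φ x v :=
    fun v => ((hφ.continuous_fderiv hone).clm_apply continuous_const)
  have hdp2cont : ∀ v, Continuous fun x => fderiv ℝ (fun y => φ y ^ 2) x v :=
    fun v => ((hp2C.continuous_fderiv hone).clm_apply continuous_const)
  have hdgcont : ∀ i (v : EuclideanSpace ℝ (Fin N)),
      Continuous fun x => fderiv ℝ (gf b b' i) x v :=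
    fun i v => (((hgC i).continuous_fderiv hone).clm_apply continuous_const)
  -- integrability of all players
  have hI1 : ∀ i ∈ S, Integrable (fun x => fderiv ℝ (fun y => φ y ^ 2) x (eI i) * gf b b' i x) volume := by
    intro i _
    apply hInt ((hdp2cont (eI i)).mul (hgcont i))
    intro x hx
    simp only [Pi.mul_apply, Pi.pow_apply]
    rw [hP2 x, hφz x hx]
    simp
  have hI2 : ∀ i ∈ S, Integrable (fun x => φ x ^ 2 * fderiv ℝ (gf b b' i) x (eI i)) volume := by
    intro i _
    apply hInt ((hφcont.pow 2).mul (hdgcont i (eI i)))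
    intro x hx
    simp only [Pi.mul_apply, Pi.pow_apply]
    rw [hφz x hx]
    simp
  have hI3 : ∀ i ∈ S, Integrable (fun x => φ x ^ 2 * gf b b' i x) volume := by
    intro i _
    apply hInt ((hφcont.pow 2).mul (hgcont i))
    intro x hx
    simp only [Pi.mul_apply, Pi.pow_apply]
    rw [hφz x hx]
    simp
  -- integration by parts
  have hIBP : ∀ i ∈ S, ∫ x, φ x ^ 2 * fderiv ℝ (gf b b' i) x (eI i)
      = -∫ x, fderiv ℝ (fun y => φ y ^ 2) x (eI i) * gf b b' i x := by
    intro i hi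
    exact integral_mul_fderiv_eq_neg_fderiv_mul_of_integrable
      (hI1 i hi) (hI2 i hi) (hI3 i hi) (fun x _ => hp2diff x) (fun x _ => (hgC i).differentiable hone x)
  -- sum over i
  have hsum : ∫ x, φ x ^ 2 * A x
      = -∫ x, ∑ i ∈ S, fderiv ℝ (fun y => φ y ^ 2) x (eI i) * gf b b' i x := by
    have hL : (fun x => φ x ^ 2 * A x)
        = fun x => ∑ i ∈ S, φ x ^ 2 * fderiv ℝ (gf b b' i) x (eI i) := by
      funext x
      rw [hAdef, Finset.mul_sum]
    rw [hL, integral_finset_sum S hI2, integral_finset_sum S hI1]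
    rw [Finset.sum_congr rfl hIBP, ← Finset.sum_neg_distrib]
  -- pointwise bound for the integration-by-parts right-hand side
  have hpt : ∀ x, -(∑ i ∈ S, fderiv ℝ (fun y => φ y ^ 2) x (eI i) * gf b b' i x)
      ≤ (∑ i ∈ S, (fderiv ℝ φ x (eI i)) ^ 2) + φ x ^ 2 * cf b b' x ^ 2 * Qf x := by
    intro x
    have h1 : ∀ i ∈ S, -(fderiv ℝ (fun y => φ y ^ 2) x (eI i) * gf b b' i x)
        ≤ (fderiv ℝ φ x (eI i)) ^ 2 + (φ x * cf b b' x * x i) ^ 2 := by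
      intro i _
      rw [hP2 x]
      have hval : ((2 * φ x) • fderiv ℝ φ x) (eI i) = 2 * φ x * fderiv ℝ φ x (eI i) := by
        simp
      rw [hval, gf]
      nlinarith [sq_nonneg (fderiv ℝ φ x (eI i) + φ x * cf b b' x * x i)]
    have hQx : Qf x = ∑ i ∈ S, x i * x i := by rw [hSdef]; rfl
    calc -(∑ i ∈ S, fderiv ℝ (fun y => φ y ^ 2) x (eI i) * gf b b' i x)
        = ∑ i ∈ S, -(fderiv ℝ (fun y => φ y ^ 2) x (eI i) * gf b b' i x) := by
          rw [Finset.sum_neg_distrib]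
      _ ≤ ∑ i ∈ S, ((fderiv ℝ φ x (eI i)) ^ 2 + (φ x * cf b b' x * x i) ^ 2) :=
          Finset.sum_le_sum h1
      _ = (∑ i ∈ S, (fderiv ℝ φ x (eI i)) ^ 2) + ∑ i ∈ S, (φ x * cf b b' x * x i) ^ 2 :=
          Finset.sum_add_distrib
      _ = (∑ i ∈ S, (fderiv ℝ φ x (eI i)) ^ 2) + φ x ^ 2 * cf b b' x ^ 2 * Qf x := by
          congr 1
          have h2 : ∀ i ∈ S, (φ x * cf b b' x * x i) ^ 2
              = (φ x ^ 2 * cf b b' x ^ 2) * (x i * x i) := fun i _ => by ring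
          rw [Finset.sum_congr rfl h2, ← Finset.mul_sum, ← hQx]
  -- integrability of the various integrands
  have hIA : Integrable (fun x => φ x ^ 2 * A x) volume := by
    apply hInt ((hφcont.pow 2).mul hAcont)
    intro x hx; simp only [Pi.mul_apply, Pi.pow_apply]; rw [hφz x hx]; simp
  have hIgrad2 : Integrable (fun x => ∑ i ∈ S, (fderiv ℝ φ x (eI i)) ^ 2) volume := by
    apply hInt (continuous_finset_sum _ fun i _ => (hdφcont (eI i)).pow 2)
    intro x hx
    have : fderiv ℝ φ x = 0 := hdz x hx
    simp [this]
  have hIcQ : Integrable (fun x => φ x ^ 2 * cf b b' x ^ 2 * Qf x) volume := by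
    apply hInt (((hφcont.pow 2).mul (hcC.continuous.pow 2)).mul hQcont)
    intro x hx; simp only [Pi.mul_apply, Pi.pow_apply]; rw [hφz x hx]; simp
  have hIsum : Integrable
      (fun x => ∑ i ∈ S, fderiv ℝ (fun y => φ y ^ 2) x (eI i) * gf b b' i x) volume :=
    integrable_finset_sum S hI1
  -- first integral bound
  have hstep1 : ∫ x, φ x ^ 2 * A x
      ≤ (∫ x, ∑ i ∈ S, (fderiv ℝ φ x (eI i)) ^ 2) + ∫ x, φ x ^ 2 * cf b b' x ^ 2 * Qf x := by
    rw [hsum, ← integral_neg, ← integral_add hIgrad2 hIcQ]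
    exact integral_mono hIsum.neg (hIgrad2.add hIcQ) hpt
  -- gradient facts
  have hgradi : ∀ (x : EuclideanSpace ℝ (Fin N)) (i : Fin N),
      gradient φ x i = fderiv ℝ φ x (eI i) := by
    intro x i
    have h1 : (inner ℝ (gradient φ x) (eI i) : ℝ) = fderiv ℝ φ x (eI i) :=
      InnerProductSpace.toDual_symm_apply
    rw [← h1, heIdef]
    simp only [EuclideanSpace.inner_single_right]
    simp [EuclideanSpace.inner_single_right]
  have hgradnorm : ∀ x, ‖gradient φ x‖ ^ 2 = ∑ i : Fin N, (gradient φ x i) ^ 2 := by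
    intro x
    rw [EuclideanSpace.norm_eq, Real.sq_sqrt (Finset.sum_nonneg fun i _ => by positivity)]
    exact Finset.sum_congr rfl fun i _ => by rw [Real.norm_eq_abs, sq_abs]
  have hptgrad : ∀ x, (∑ i ∈ S, (fderiv ℝ φ x (eI i)) ^ 2) ≤ ‖gradient φ x‖ ^ 2 := by
    intro x
    rw [hgradnorm x]
    have h2 : ∀ i ∈ S, (fderiv ℝ φ x (eI i)) ^ 2 = (gradient φ x i) ^ 2 :=
      fun i _ => by rw [hgradi]
    rw [Finset.sum_congr rfl h2]
    exact Finset.sum_le_sum_of_subset_of_nonneg (Finset.subset_univ S)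
      (fun i _ _ => sq_nonneg _)
  have hgradzero : ∀ x, x ∉ tsupport φ → gradient φ x = 0 := by
    intro x hx
    have h0 : fderiv ℝ φ x = 0 := hdz x hx
    show (InnerProductSpace.toDual ℝ _).symm (fderiv ℝ φ x) = 0
    rw [h0]; simp
  have hgradcont : Continuous fun x => gradient φ x :=
    (InnerProductSpace.toDual ℝ (EuclideanSpace ℝ (Fin N))).symm.continuous.comp
      (hφ.continuous_fderiv hone)
  have hIgradN : Integrable (fun x => ‖gradient φ x‖ ^ 2) volume := by
    apply hInt ((hgradcont.norm).pow 2)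
    intro x hx; simp only [Pi.mul_apply, Pi.pow_apply]; rw [hgradzero x hx]; simp
  have hstep2 : (∫ x, ∑ i ∈ S, (fderiv ℝ φ x (eI i)) ^ 2) ≤ ∫ x, ‖gradient φ x‖ ^ 2 :=
    integral_mono hIgrad2 hIgradN hptgrad
  -- combined global bound
  have hmain : ∫ x, (φ x ^ 2 * A x - φ x ^ 2 * cf b b' x ^ 2 * Qf x)
      ≤ ∫ x, ‖gradient φ x‖ ^ 2 := by
    rw [integral_sub hIA hIcQ]
    linarith
  -- reduction to Ω
  have hWzero : ∀ x ∉ Ω, φ x ^ 2 * A x - φ x ^ 2 * cf b b' x ^ 2 * Qf x = 0 := by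
    intro x hx; rw [hφzero x hx]; ring
  have hWΩ : ∫ x in Ω, (φ x ^ 2 * A x - φ x ^ 2 * cf b b' x ^ 2 * Qf x)
      = ∫ x, (φ x ^ 2 * A x - φ x ^ 2 * cf b b' x ^ 2 * Qf x) :=
    setIntegral_eq_integral_of_forall_compl_eq_zero hWzero
  have hgradΩ : ∫ x in Ω, ‖gradient φ x‖ ^ 2 = ∫ x, ‖gradient φ x‖ ^ 2 :=
    setIntegral_eq_integral_of_forall_compl_eq_zero (fun x hx => by
      rw [hgradzero x (fun hmem => hx (hφΩ hmem))]; simp)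
  -- integrability on Ω
  set C : ℝ := b₀ * ((1 - b₀) ^ 2)⁻¹ with hCdef
  have hICφ : Integrable (fun x => C * φ x ^ 2) (volume.restrict Ω) := by
    apply Integrable.restrict
    apply hInt (continuous_const.mul (hφcont.pow 2))
    intro x hx; simp only [Pi.mul_apply, Pi.pow_apply]; rw [hφz x hx]; ring
  have hmeasV : AEStronglyMeasurable (fun x => V x * φ x ^ 2) (volume.restrict Ω) :=
    (hVmeas.mul ((hφcont.measurable).pow_const 2)).aestronglyMeasurable
  have hIVφ : Integrable (fun x => V x * φ x ^ 2) (volume.restrict Ω) := by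
    apply Integrable.mono' hICφ hmeasV
    filter_upwards [hV] with x hVx
    rcases eq_or_ne (φ x) 0 with h0 | h0
    · rw [h0]; simp
    · have ht0 : 0 ≤ Qf x := Qf_nonneg x
      have htb₀ : Qf x ≤ b₀ := hKb₀ x h0
      have h1t : (0 : ℝ) < 1 - b₀ := by linarith
      have h1tx : (0 : ℝ) < 1 - Qf x := by linarith
      have hVl : -(Qf x / (1 - Qf x) ^ 2) ≤ V x := by rw [← hcrQ x]; exact hVx.1
      have hVu : V x ≤ 0 := hVx.2
      have habs : ‖V x * φ x ^ 2‖ = -V x * φ x ^ 2 := by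
        rw [norm_mul, Real.norm_eq_abs, Real.norm_eq_abs, abs_of_nonpos hVu,
          abs_of_nonneg (sq_nonneg (φ x))]
      rw [habs]
      have hb1' : -V x ≤ Qf x * ((1 - Qf x) ^ 2)⁻¹ := by
        rw [div_eq_mul_inv] at hVl; linarith
      have hmono : Qf x * ((1 - Qf x) ^ 2)⁻¹ ≤ C := by
        rw [hCdef]
        have hsq : (1 - b₀) ^ 2 ≤ (1 - Qf x) ^ 2 :=
          pow_le_pow_left₀ (le_of_lt h1t) (by linarith) 2
        have hsqpos : (0 : ℝ) < (1 - b₀) ^ 2 := by positivity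
        have hinv : ((1 - Qf x) ^ 2)⁻¹ ≤ ((1 - b₀) ^ 2)⁻¹ := inv_anti₀ hsqpos hsq
        exact mul_le_mul htb₀ hinv (by positivity) hb₀0
      exact mul_le_mul_of_nonneg_right (hb1'.trans hmono) (sq_nonneg (φ x))
  have hIφ2Ω : Integrable (fun x => φ x ^ 2) (volume.restrict Ω) := by
    apply Integrable.restrict
    apply hInt (hφcont.pow 2)
    intro x hx; simp only [Pi.mul_apply, Pi.pow_apply]; rw [hφz x hx]; ring
  have hIWΩ : Integrable
      (fun x => φ x ^ 2 * A x - φ x ^ 2 * cf b b' x ^ 2 * Qf x) (volume.restrict Ω) :=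
    (hIA.sub hIcQ).restrict
  -- a.e. pointwise comparison on Ω
  have hae : ∀ᵐ x ∂(volume.restrict Ω),
      ((N : ℝ) - 1) * φ x ^ 2 - V x * φ x ^ 2
        ≤ φ x ^ 2 * A x - φ x ^ 2 * cf b b' x ^ 2 * Qf x := by
    filter_upwards [hV] with x hVx
    rcases eq_or_ne (φ x) 0 with h0 | h0
    · rw [h0]; ring_nf; exact le_refl _
    · have hQb : Qf x < b := hKb x h0
      have hQ1x : Qf x < 1 := by linarith
      have ht0 : 0 ≤ Qf x := Qf_nonneg x
      have h1t : (0 : ℝ) < 1 - Qf x := by linarith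
      have hcfx : cf b b' x = (1 - Qf x)⁻¹ := cf_eq hbb' (le_of_lt hQb)
      have hAx : A x = ((N : ℝ) - 1) * (1 - Qf x)⁻¹ + 2 * Qf x * ((1 - Qf x) ^ 2)⁻¹ := by
        rw [hAdef]
        exact sum_fderiv_gf hN1 hbb' hb'1 hQb
      have hVl : -(Qf x / (1 - Qf x) ^ 2) ≤ V x := by rw [← hcrQ x]; exact hVx.1
      have hNr : (2 : ℝ) ≤ (N : ℝ) := by exact_mod_cast hN
      have hinv1 : (1 : ℝ) ≤ (1 - Qf x)⁻¹ := (one_le_inv₀ h1t).2 (by linarith)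
      have hp : (0 : ℝ) ≤ φ x ^ 2 := sq_nonneg _
      rw [hAx, hcfx]
      have hinvsq : ((1 - Qf x)⁻¹) ^ 2 = ((1 - Qf x) ^ 2)⁻¹ := inv_pow _ 2
      rw [hinvsq]
      have hVle : -V x * φ x ^ 2 ≤ (Qf x * ((1 - Qf x) ^ 2)⁻¹) * φ x ^ 2 := by
        apply mul_le_mul_of_nonneg_right _ hp
        rw [div_eq_mul_inv] at hVl; linarith
      have hNle : ((N : ℝ) - 1) * φ x ^ 2
          ≤ (((N : ℝ) - 1) * (1 - Qf x)⁻¹) * φ x ^ 2 := by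
        apply mul_le_mul_of_nonneg_right _ hp
        have h5 : ((N : ℝ) - 1) * 1 ≤ ((N : ℝ) - 1) * (1 - Qf x)⁻¹ :=
          mul_le_mul_of_nonneg_left hinv1 (by linarith)
        linarith
      ring_nf at hVle hNle ⊢
      linarith
  -- integral comparison on Ω
  have hΩcomp : ∫ x in Ω, (((N : ℝ) - 1) * φ x ^ 2 - V x * φ x ^ 2)
      ≤ ∫ x in Ω, (φ x ^ 2 * A x - φ x ^ 2 * cf b b' x ^ 2 * Qf x) := by
    apply integral_mono_ae _ hIWΩ hae
    exact (hIφ2Ω.const_mul _).sub hIVφ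
  -- put everything together
  have hfinal1 : ∫ x in Ω, (((N : ℝ) - 1) * φ x ^ 2 - V x * φ x ^ 2)
      = ((N : ℝ) - 1) * (∫ x in Ω, φ x ^ 2) - ∫ x in Ω, V x * φ x ^ 2 := by
    rw [integral_sub (hIφ2Ω.const_mul _) hIVφ, integral_const_mul]
  rw [hfinal1] at hΩcomp
  have hchain : ∫ x in Ω, (φ x ^ 2 * A x - φ x ^ 2 * cf b b' x ^ 2 * Qf x)
      ≤ ∫ x in Ω, ‖gradient φ x‖ ^ 2 := by
    rw [hWΩ, hgradΩ]
    exact hmain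
  linarith
end
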